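/- arXiv:1707.06847 — 9 statements merged into one kernel-verified Lean document; each statement's English description precedes it below -/
import Mathlib

section
/- Let X be a complex Banach space and suppose that the set Γ_s of strong peak points for A_{w*u}(B_{X*}) with respect to the norm is norm dense in S_{X*}. Then for every ε ∈ (0, 1) there exists η(ε) > 0 (one may take η(ε) = ε/4) such that whenever f ∈ A_{w*u}(B_{X*}) with ‖f‖∞ = 1 and x₀* ∈ S_{X*} satisfy |f(x₀*)| > 1 − η(ε), there exist g ∈ A_{w*u}(B_{X*}) with ‖g‖∞ = 1 and x₁* ∈ S_{X*} such that |g(x₁*)| = 1, ‖g − f‖∞ < ε and ‖x₁* − x₀*‖ < ε. -/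
open NormedSpace Metric Filter Topology

noncomputable section

variable {X Y : Type*} [NormedAddCommGroup X] [NormedSpace ℂ X]
  [NormedAddCommGroup Y] [NormedSpace ℂ Y]

/-- Membership in `A_{w*u}(B_{X*}, Y)`: `f` is weak-*-to-norm continuous on the closed unit
ball of the dual (equivalently, weak-* uniformly continuous, as the ball is weak-* compact)
and holomorphic on the open unit ball. -/
def MemAwsu (f : StrongDual ℂ X → Y) : Prop :=
  ContinuousOn (fun φ : WeakDual ℂ X => f (WeakDual.toStrongDual φ))
      {φ : WeakDual ℂ X | ‖WeakDual.toStrongDual φ‖ ≤ 1}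
    ∧ DifferentiableOn ℂ f (ball (0 : StrongDual ℂ X) 1)

/-- The supremum norm `‖f‖_∞ = sup {‖f x*‖ : x* ∈ B_{X*}}`. -/
def supNorm (f : StrongDual ℂ X → Y) : ℝ :=
  ⨆ x : closedBall (0 : StrongDual ℂ X) 1, ‖f (x : StrongDual ℂ X)‖

/-- `x₀` is a strong peak point for `A_{w*u}(B_{X*})` with respect to the norm. -/
def IsNormStrongPeakPoint (x₀ : StrongDual ℂ X) : Prop :=
  ∃ f : StrongDual ℂ X → ℂ, MemAwsu f ∧ supNorm f = 1 ∧ ‖f x₀‖ = 1 ∧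
    ∀ δ > 0, ∃ c < 1, ∀ y ∈ closedBall (0 : StrongDual ℂ X) 1, δ ≤ ‖y - x₀‖ → ‖f y‖ ≤ c

namespace BPBAux

lemma setK_eq : {φ : WeakDual ℂ X | ‖WeakDual.toStrongDual φ‖ ≤ 1}
    = WeakDual.toStrongDual ⁻¹' closedBall (0 : StrongDual ℂ X) 1 := by
  ext φ; simp [mem_closedBall_zero_iff]

lemma exists_max {f : StrongDual ℂ X → ℂ} (hf : MemAwsu f) :
    ∃ xm ∈ closedBall (0 : StrongDual ℂ X) 1,
      ∀ y ∈ closedBall (0 : StrongDual ℂ X) 1, ‖f y‖ ≤ ‖f xm‖ := by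
  have hK : IsCompact {φ : WeakDual ℂ X | ‖WeakDual.toStrongDual φ‖ ≤ 1} := by
    rw [setK_eq]; exact WeakDual.isCompact_closedBall (0 : StrongDual ℂ X) 1
  have hne : Set.Nonempty {φ : WeakDual ℂ X | ‖WeakDual.toStrongDual φ‖ ≤ 1} :=
    ⟨0, by simp⟩
  obtain ⟨φm, hφm, hmax⟩ := hK.exists_isMaxOn hne hf.1.norm
  refine ⟨WeakDual.toStrongDual φm, by simpa [mem_closedBall_zero_iff] using hφm,
    fun y hy => ?_⟩
  exact hmax (show StrongDual.toWeakDual y ∈ _ by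
    simpa [mem_closedBall_zero_iff] using mem_closedBall_zero_iff.mp hy)

lemma contOn {f : StrongDual ℂ X → ℂ} (hf : MemAwsu f) :
    ContinuousOn f (closedBall (0 : StrongDual ℂ X) 1) := by
  have h := hf.1.comp (Dual.toWeakDual_continuous.continuousOn
    (s := closedBall (0 : StrongDual ℂ X) 1))
    (fun y hy => by simpa [mem_closedBall_zero_iff] using mem_closedBall_zero_iff.mp hy)
  exact h

lemma norm_le_supNorm {f : StrongDual ℂ X → ℂ} (hf : MemAwsu f) {y : StrongDual ℂ X}
    (hy : y ∈ closedBall (0 : StrongDual ℂ X) 1) : ‖f y‖ ≤ supNorm f := by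
  obtain ⟨xm, hxm, hmax⟩ := exists_max hf
  have hb : BddAbove (Set.range fun x : closedBall (0 : StrongDual ℂ X) 1 => ‖f x‖) :=
    ⟨‖f xm‖, by rintro r ⟨x, rfl⟩; exact hmax x x.2⟩
  exact le_ciSup hb ⟨y, hy⟩

lemma supNorm_eq_of_max {f : StrongDual ℂ X → ℂ} {xm : StrongDual ℂ X}
    (hxm : xm ∈ closedBall (0 : StrongDual ℂ X) 1)
    (hmax : ∀ y ∈ closedBall (0 : StrongDual ℂ X) 1, ‖f y‖ ≤ ‖f xm‖) :
    supNorm f = ‖f xm‖ := by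
  have hne : Nonempty (closedBall (0 : StrongDual ℂ X) 1) := ⟨⟨xm, hxm⟩⟩
  refine le_antisymm (ciSup_le fun x => hmax x x.2) ?_
  exact le_ciSup (⟨‖f xm‖, by rintro r ⟨x, rfl⟩; exact hmax x x.2⟩ :
    BddAbove (Set.range fun x : closedBall (0 : StrongDual ℂ X) 1 => ‖f x‖)) ⟨xm, hxm⟩

lemma supNorm_le {f : StrongDual ℂ X → ℂ} {B : ℝ}
    (h : ∀ y ∈ closedBall (0 : StrongDual ℂ X) 1, ‖f y‖ ≤ B) : supNorm f ≤ B := by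
  have hne : Nonempty (closedBall (0 : StrongDual ℂ X) 1) := ⟨⟨0, by simp⟩⟩
  exact ciSup_le fun x => h x x.2

end BPBAux

set_option maxHeartbeats 1000000

/-- Bishop-Phelps-Bollobás theorem for `A_{w*u}(B_{X*})`. -/
theorem bpb_Awsu (X : Type*) [NormedAddCommGroup X] [NormedSpace ℂ X] [CompleteSpace X]
    (hdense : sphere (0 : StrongDual ℂ X) 1 ⊆
      closure {z : StrongDual ℂ X | ‖z‖ = 1 ∧ IsNormStrongPeakPoint z}) :
    ∀ ε ∈ Set.Ioo (0 : ℝ) 1, ∃ η > 0, η = ε / 4 ∧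
      ∀ f : StrongDual ℂ X → ℂ, MemAwsu f → supNorm f = 1 →
        ∀ x₀ : StrongDual ℂ X, ‖x₀‖ = 1 → 1 - η < ‖f x₀‖ →
          ∃ g : StrongDual ℂ X → ℂ, ∃ x₁ : StrongDual ℂ X, MemAwsu g ∧ supNorm g = 1 ∧ ‖x₁‖ = 1 ∧
            ‖g x₁‖ = 1 ∧ supNorm (fun y => g y - f y) < ε ∧ ‖x₁ - x₀‖ < ε := by
  rintro ε ⟨hε0, hε1⟩
  refine ⟨ε / 4, by linarith, rfl, ?_⟩
  intro f hf hfnorm x₀ hx₀ hfx₀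
  have hfle : ∀ y ∈ closedBall (0 : StrongDual ℂ X) 1, ‖f y‖ ≤ 1 := fun y hy =>
    hfnorm ▸ BPBAux.norm_le_supNorm hf hy
  have hx₀B : x₀ ∈ closedBall (0 : StrongDual ℂ X) 1 := by
    rw [mem_closedBall_zero_iff, hx₀]
  have hγpos : (0:ℝ) < ‖f x₀‖ - (1 - ε / 4) := by linarith
  have hcont : ContinuousWithinAt f (closedBall (0 : StrongDual ℂ X) 1) x₀ :=
    BPBAux.contOn hf x₀ hx₀B
  rw [Metric.continuousWithinAt_iff] at hcont
  obtain ⟨τ, hτpos, hτ⟩ := hcont _ hγpos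
  have hx₀s : x₀ ∈ sphere (0 : StrongDual ℂ X) 1 := by
    rw [mem_sphere_zero_iff_norm]; exact hx₀
  have hclos := hdense hx₀s
  rw [Metric.mem_closure_iff] at hclos
  obtain ⟨z, hzmem, hzdist⟩ := hclos (min τ (ε / 2)) (lt_min hτpos (by linarith))
  obtain ⟨hz1, q, hqA, hqnorm, hqz, hqpeak⟩ := hzmem
  have hzB : z ∈ closedBall (0 : StrongDual ℂ X) 1 := by
    rw [mem_closedBall_zero_iff, hz1]
  have hzx₀ : ‖z - x₀‖ < min τ (ε / 2) := by
    rwa [dist_comm, dist_eq_norm] at hzdist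
  have hρ : 1 - ε / 4 < ‖f z‖ := by
    have h1 : dist (f z) (f x₀) < ‖f x₀‖ - (1 - ε / 4) := hτ hzB (by
      rw [dist_eq_norm]; exact lt_of_lt_of_le hzx₀ (min_le_left _ _))
    rw [dist_eq_norm] at h1
    have h2 : ‖f x₀‖ - ‖f z‖ ≤ ‖f z - f x₀‖ := by
      have h3 := norm_sub_norm_le (f x₀) (f z)
      rwa [norm_sub_rev] at h3
    linarith
  set ρ : ℝ := ‖f z‖ with hρdef
  have hρpos : 0 < ρ := by simp only [hρdef]; linarith
  obtain ⟨c, hc1, hcb⟩ := hqpeak (ε / 2) (by linarith)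
  have hc'lt : max c 0 < 1 := max_lt hc1 one_pos
  obtain ⟨n, hn⟩ := exists_pow_lt_of_lt_one (by norm_num : (0:ℝ) < 1/2) hc'lt
  have hqz1 : ‖q z‖ = 1 := hqz
  have hqzne : (q z) ^ n ≠ 0 := pow_ne_zero n (by
    intro h; rw [h] at hqz1; simp at hqz1)
  have hqzn : ‖(q z) ^ n‖ = 1 := by rw [norm_pow, hqz1, one_pow]
  have hqle : ∀ y ∈ closedBall (0 : StrongDual ℂ X) 1, ‖q y‖ ≤ 1 := fun y hy =>
    hqnorm ▸ BPBAux.norm_le_supNorm hqA hy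
  set θ : ℂ := f z / ((ρ : ℂ) * (q z) ^ n) with hθdef
  have hρcne : (ρ : ℂ) ≠ 0 := by exact_mod_cast hρpos.ne'
  have hθnorm : ‖θ‖ = 1 := by
    rw [hθdef, norm_div, norm_mul, hqzn, Complex.norm_real, Real.norm_eq_abs,
      abs_of_pos hρpos, mul_one]
    exact div_self hρpos.ne'
  set cc : ℂ := ((ε / 2 : ℝ) : ℂ) * θ with hccdef
  have hccnorm : ‖cc‖ = ε / 2 := by
    rw [hccdef, norm_mul, Complex.norm_real, Real.norm_eq_abs, abs_of_pos (by linarith),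
      hθnorm, mul_one]
  set u : StrongDual ℂ X → ℂ := fun y => f y + cc * (q y) ^ n with hudef
  have huA : MemAwsu u :=
    ⟨hf.1.add (continuousOn_const.mul (hqA.1.pow n)),
     hf.2.add ((differentiableOn_const cc).mul (hqA.2.pow n))⟩
  have huz : ‖u z‖ = ρ + ε / 2 := by
    have h1 : u z = f z * (((1 + (ε / 2) / ρ : ℝ)) : ℂ) := by
      simp only [hudef, hccdef, hθdef]
      push_cast
      field_simp
    rw [h1, norm_mul, Complex.norm_real, Real.norm_eq_abs,
      abs_of_pos (by positivity), ← hρdef]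
    field_simp
  have hubound : ∀ y ∈ closedBall (0 : StrongDual ℂ X) 1, ‖u y‖ ≤ 1 + ε / 2 := by
    intro y hy
    calc ‖u y‖ ≤ ‖f y‖ + ‖cc * (q y) ^ n‖ := norm_add_le _ _
      _ = ‖f y‖ + (ε / 2) * ‖q y‖ ^ n := by rw [norm_mul, hccnorm, norm_pow]
      _ ≤ 1 + (ε / 2) * 1 := by
          have h4 : ‖q y‖ ^ n ≤ 1 := pow_le_one₀ (norm_nonneg _) (hqle y hy)
          have h5 := hfle y hy
          nlinarith
      _ = 1 + ε / 2 := by ring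
  have hufar : ∀ y ∈ closedBall (0 : StrongDual ℂ X) 1, ε / 2 ≤ ‖y - z‖ →
      ‖u y‖ ≤ 1 + (ε / 2) * (max c 0) ^ n := by
    intro y hy hfar
    have hqc : ‖q y‖ ^ n ≤ (max c 0) ^ n :=
      pow_le_pow_left₀ (norm_nonneg _) (le_trans (hcb y hy hfar) (le_max_left _ _)) n
    calc ‖u y‖ ≤ ‖f y‖ + ‖cc * (q y) ^ n‖ := norm_add_le _ _
      _ = ‖f y‖ + (ε / 2) * ‖q y‖ ^ n := by rw [norm_mul, hccnorm, norm_pow]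
      _ ≤ 1 + (ε / 2) * (max c 0) ^ n := by
          have h5 := hfle y hy
          nlinarith
  have hkey : 1 + (ε / 2) * (max c 0) ^ n < ρ + ε / 2 := by
    have hp : 0 < (ε / 2) * (1 / 2 - (max c 0) ^ n) :=
      mul_pos (by linarith) (by linarith)
    nlinarith
  obtain ⟨xm, hxmB, hxmax⟩ := BPBAux.exists_max huA
  set M : ℝ := ‖u xm‖ with hMdef
  have hMge : ρ + ε / 2 ≤ M := huz ▸ hxmax z hzB
  have hM1 : 1 < M := by linarith
  have hMpos : 0 < M := by linarith
  have hMle : M ≤ 1 + ε / 2 := hubound xm hxmB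
  have hnear : ∀ w ∈ closedBall (0 : StrongDual ℂ X) 1, ‖u w‖ = M → ‖w - z‖ < ε / 2 := by
    intro w hw hwM
    by_contra hcon
    push_neg at hcon
    have h6 := hufar w hw hcon
    rw [hwM] at h6
    linarith
  have hx₁ex : ∃ x₁ : StrongDual ℂ X, ‖x₁‖ = 1 ∧ ‖u x₁‖ = M ∧ ‖x₁ - z‖ < ε / 2 := by
    by_cases hcase : ‖u z‖ = M
    · exact ⟨z, hz1, hcase, by simp; linarith⟩
    · have hxm1 : ‖xm‖ = 1 := by
        rcases lt_or_eq_of_le (mem_closedBall_zero_iff.mp hxmB) with hlt | heq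
        · exfalso
          have hxmball : xm ∈ ball (0 : StrongDual ℂ X) 1 := mem_ball_zero_iff.mpr hlt
          have hmaxOn : IsMaxOn (norm ∘ u) (ball (0 : StrongDual ℂ X) 1) xm := fun y hy =>
            hxmax y (ball_subset_closedBall hy)
          have heqOn := Complex.norm_eqOn_of_isPreconnected_of_isMaxOn
            (convex_ball (0 : StrongDual ℂ X) 1).isPreconnected isOpen_ball huA.2 hxmball hmaxOn
          have hzcl : z ∈ closure (ball (0 : StrongDual ℂ X) 1) := by
            rw [closure_ball (0 : StrongDual ℂ X) one_ne_zero]; exact hzB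
          have hNB : (𝓝[ball (0 : StrongDual ℂ X) 1] z).NeBot :=
            mem_closure_iff_nhdsWithin_neBot.mp hzcl
          have ht1 : Tendsto (fun y => ‖u y‖) (𝓝[ball (0 : StrongDual ℂ X) 1] z) (𝓝 ‖u z‖) :=
            ((BPBAux.contOn huA z hzB).norm.mono ball_subset_closedBall)
          have ht2 : Tendsto (fun y => ‖u y‖) (𝓝[ball (0 : StrongDual ℂ X) 1] z) (𝓝 M) := by
            refine Tendsto.congr' ?_ tendsto_const_nhds
            filter_upwards [self_mem_nhdsWithin] with y hy
            exact (heqOn hy).symm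
          exact hcase (tendsto_nhds_unique ht1 ht2)
        · exact heq
      exact ⟨xm, hxm1, rfl, hnear xm hxmB rfl⟩
  obtain ⟨x₁, hx₁1, hx₁M, hx₁z⟩ := hx₁ex
  have hx₁B : x₁ ∈ closedBall (0 : StrongDual ℂ X) 1 := by
    rw [mem_closedBall_zero_iff, hx₁1]
  have hMcne : (M : ℂ) ≠ 0 := by exact_mod_cast hMpos.ne'
  have hMinv : ‖((M : ℂ))⁻¹‖ = M⁻¹ := by
    rw [norm_inv, Complex.norm_real, Real.norm_eq_abs, abs_of_pos hMpos]
  have hMinvle : M⁻¹ ≤ 1 := inv_le_one_of_one_le₀ hM1.le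
  refine ⟨fun y => (M : ℂ)⁻¹ * u y, x₁, ?_, ?_, hx₁1, ?_, ?_, ?_⟩
  · exact ⟨continuousOn_const.mul huA.1, (differentiableOn_const _).mul huA.2⟩
  · have hmax' : ∀ y ∈ closedBall (0 : StrongDual ℂ X) 1,
        ‖(M : ℂ)⁻¹ * u y‖ ≤ ‖(M : ℂ)⁻¹ * u x₁‖ := by
      intro y hy
      rw [norm_mul, norm_mul]
      exact mul_le_mul_of_nonneg_left (hx₁M ▸ hxmax y hy) (norm_nonneg _)
    rw [BPBAux.supNorm_eq_of_max hx₁B hmax', norm_mul, hx₁M, hMinv,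
      inv_mul_cancel₀ hMpos.ne']
  · rw [norm_mul, hx₁M, hMinv, inv_mul_cancel₀ hMpos.ne']
  · have hbound : ∀ y ∈ closedBall (0 : StrongDual ℂ X) 1,
        ‖(M : ℂ)⁻¹ * u y - f y‖ ≤ 1 - M⁻¹ + M⁻¹ * (ε / 2) := by
      intro y hy
      have hrew : (M : ℂ)⁻¹ * u y - f y
          = ((M : ℂ)⁻¹ - 1) * f y + (M : ℂ)⁻¹ * (cc * (q y) ^ n) := by
        simp only [hudef]; ring
      rw [hrew]
      have h1 : ‖((M : ℂ)⁻¹ - 1)‖ = 1 - M⁻¹ := by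
        have h2 : ((M : ℂ)⁻¹ - 1) = ((M⁻¹ - 1 : ℝ) : ℂ) := by push_cast; ring
        rw [h2, Complex.norm_real, Real.norm_eq_abs, abs_of_nonpos (by linarith)]
        ring
      calc ‖((M : ℂ)⁻¹ - 1) * f y + (M : ℂ)⁻¹ * (cc * (q y) ^ n)‖
          ≤ ‖((M : ℂ)⁻¹ - 1) * f y‖ + ‖(M : ℂ)⁻¹ * (cc * (q y) ^ n)‖ := norm_add_le _ _
        _ = (1 - M⁻¹) * ‖f y‖ + M⁻¹ * ((ε / 2) * ‖q y‖ ^ n) := by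
            rw [norm_mul, norm_mul, norm_mul, h1, hMinv, hccnorm, norm_pow]
        _ ≤ (1 - M⁻¹) * 1 + M⁻¹ * ((ε / 2) * 1) := by
            have h4 : ‖q y‖ ^ n ≤ 1 := pow_le_one₀ (norm_nonneg _) (hqle y hy)
            have h5 := hfle y hy
            have h6 : (0:ℝ) ≤ M⁻¹ := by positivity
            have h7 : (0:ℝ) ≤ 1 - M⁻¹ := by linarith
            gcongr
        _ = 1 - M⁻¹ + M⁻¹ * (ε / 2) := by ring
    have hlt : 1 - M⁻¹ + M⁻¹ * (ε / 2) < ε := by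
      have heq : 1 - M⁻¹ + M⁻¹ * (ε / 2) = (M - 1 + ε / 2) / M := by
        field_simp
      rw [heq, div_lt_iff₀ hMpos]
      nlinarith [mul_pos hε0 (sub_pos.mpr hM1)]
    exact lt_of_le_of_lt (BPBAux.supNorm_le hbound) hlt
  · have htri : ‖x₁ - x₀‖ ≤ ‖x₁ - z‖ + ‖z - x₀‖ := by
      have h8 := dist_triangle x₁ z x₀
      simpa [dist_eq_norm] using h8
    have hzx₀' : ‖z - x₀‖ < ε / 2 := lt_of_lt_of_le hzx₀ (min_le_right _ _)
    linarith
end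
end

section
/- Let X and Y be complex Banach spaces and suppose that the set Γ_s of strong peak points for A_{w*u}(B_{X*}) with respect to the norm is norm dense in S_{X*}. Then for every ε ∈ (0, 1) there exists η(ε) > 0 such that whenever f ∈ A_{w*u}(B_{X*}, Y) with ‖f‖∞ = 1 and x₀* ∈ S_{X*} satisfy ‖f(x₀*)‖_Y > 1 − η(ε), there exist g ∈ A_{w*u}(B_{X*}, Y) with ‖g‖∞ = 1 and x₁* ∈ S_{X*} such that ‖g(x₁*)‖_Y = 1, ‖g − f‖∞ < ε and ‖x₁* − x₀*‖ < ε. -/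
open NormedSpace Metric Filter Topology

noncomputable section

variable {X Y : Type*} [NormedAddCommGroup X] [NormedSpace ℂ X]
  [NormedAddCommGroup Y] [NormedSpace ℂ Y]

lemma awsu_exists_max {F : StrongDual ℂ X → Y}
    (hF : ContinuousOn (fun φ : WeakDual ℂ X => F (WeakDual.toStrongDual φ))
      {φ : WeakDual ℂ X | ‖WeakDual.toStrongDual φ‖ ≤ 1}) :
    ∃ m ∈ closedBall (0 : StrongDual ℂ X) 1, ∀ y ∈ closedBall (0 : StrongDual ℂ X) 1, ‖F y‖ ≤ ‖F m‖ := by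
  have hset : {φ : WeakDual ℂ X | ‖WeakDual.toStrongDual φ‖ ≤ 1}
      = WeakDual.toStrongDual ⁻¹' closedBall (0 : StrongDual ℂ X) 1 := by
    ext φ; simp [mem_closedBall_zero_iff]
  have hK : IsCompact {φ : WeakDual ℂ X | ‖WeakDual.toStrongDual φ‖ ≤ 1} := by
    rw [hset]; exact WeakDual.isCompact_closedBall (0 : StrongDual ℂ X) 1
  have hne : {φ : WeakDual ℂ X | ‖WeakDual.toStrongDual φ‖ ≤ 1}.Nonempty :=
    ⟨0, by simp⟩
  obtain ⟨ψ, hψmem, hψ⟩ := hK.exists_isMaxOn hne hF.norm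
  refine ⟨WeakDual.toStrongDual ψ, by simpa [mem_closedBall_zero_iff] using hψmem, ?_⟩
  intro y hy
  have hy' : (StrongDual.toWeakDual y)
      ∈ {φ : WeakDual ℂ X | ‖WeakDual.toStrongDual φ‖ ≤ 1} := by
    simpa [mem_closedBall_zero_iff] using hy
  exact isMaxOn_iff.1 hψ _ hy'

lemma supNorm_eq_of_max {F : StrongDual ℂ X → Y} {m : StrongDual ℂ X} (hm : m ∈ closedBall (0 : StrongDual ℂ X) 1)
    (hmax : ∀ y ∈ closedBall (0 : StrongDual ℂ X) 1, ‖F y‖ ≤ ‖F m‖) : supNorm F = ‖F m‖ := by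
  haveI : Nonempty (closedBall (0 : StrongDual ℂ X) 1) := ⟨⟨m, hm⟩⟩
  have hbdd : BddAbove (Set.range fun x : closedBall (0 : StrongDual ℂ X) 1 => ‖F (x : StrongDual ℂ X)‖) :=
    ⟨‖F m‖, by rintro r ⟨x, rfl⟩; exact hmax x x.2⟩
  refine le_antisymm (ciSup_le fun x => hmax x x.2) ?_
  exact le_ciSup hbdd ⟨m, hm⟩

lemma awsu_norm_le_supNorm {F : StrongDual ℂ X → Y}
    (hF : ContinuousOn (fun φ : WeakDual ℂ X => F (WeakDual.toStrongDual φ))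
      {φ : WeakDual ℂ X | ‖WeakDual.toStrongDual φ‖ ≤ 1})
    {y : StrongDual ℂ X} (hy : y ∈ closedBall (0 : StrongDual ℂ X) 1) : ‖F y‖ ≤ supNorm F := by
  obtain ⟨m, hm, hmax⟩ := awsu_exists_max hF
  rw [supNorm_eq_of_max hm hmax]
  exact hmax y hy

lemma awsu_continuousOn {F : StrongDual ℂ X → Y}
    (hF : ContinuousOn (fun φ : WeakDual ℂ X => F (WeakDual.toStrongDual φ))
      {φ : WeakDual ℂ X | ‖WeakDual.toStrongDual φ‖ ≤ 1}) :
    ContinuousOn F (closedBall (0 : StrongDual ℂ X) 1) := by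
  have h : ContinuousOn
      (fun y : StrongDual ℂ X => F (WeakDual.toStrongDual (StrongDual.toWeakDual y)))
      (closedBall (0 : StrongDual ℂ X) 1) :=
    hF.comp NormedSpace.Dual.toWeakDual_continuous.continuousOn
      (fun y hy => by simpa [mem_closedBall_zero_iff] using hy)
  simpa using h


set_option maxHeartbeats 2000000 in
/-- Vector-valued Bishop-Phelps-Bollobás theorem for `A_{w*u}(B_{X*}, Y)`. -/
theorem bpb_Awsu_vector_valued (X Y : Type*)
    [NormedAddCommGroup X] [NormedSpace ℂ X] [CompleteSpace X]
    [NormedAddCommGroup Y] [NormedSpace ℂ Y] [CompleteSpace Y]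
    (hdense : sphere (0 : StrongDual ℂ X) 1 ⊆
      closure {z : StrongDual ℂ X | ‖z‖ = 1 ∧ IsNormStrongPeakPoint z}) :
    ∀ ε ∈ Set.Ioo (0 : ℝ) 1, ∃ η > 0,
      ∀ f : StrongDual ℂ X → Y, MemAwsu f → supNorm f = 1 →
        ∀ x₀ : StrongDual ℂ X, ‖x₀‖ = 1 → 1 - η < ‖f x₀‖ →
          ∃ g : StrongDual ℂ X → Y, ∃ x₁ : StrongDual ℂ X, MemAwsu g ∧ supNorm g = 1 ∧ ‖x₁‖ = 1 ∧
            ‖g x₁‖ = 1 ∧ supNorm (fun y => g y - f y) < ε ∧ ‖x₁ - x₀‖ < ε := by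
  rintro ε ⟨hε0, hε1⟩
  refine ⟨ε/64, by positivity, ?_⟩
  intro f hf hfsup x₀ hx₀ hfx₀
  have hx₀ball : x₀ ∈ closedBall (0 : StrongDual ℂ X) 1 := by
    simp [mem_closedBall_zero_iff, hx₀.le]
  -- norm continuity of f at x₀
  have hfc : ContinuousOn f (closedBall (0 : StrongDual ℂ X) 1) := awsu_continuousOn hf.1
  obtain ⟨ρ, hρ0, hρ⟩ := Metric.continuousWithinAt_iff.1 (hfc x₀ hx₀ball) (ε/64) (by positivity)
  -- strong peak point z₁ near x₀
  have hx₀sph : x₀ ∈ sphere (0 : StrongDual ℂ X) 1 := by simp [mem_sphere_zero_iff_norm, hx₀]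
  obtain ⟨z₁, hz₁mem, hz₁d⟩ := Metric.mem_closure_iff.1 (hdense hx₀sph) (min ρ (ε/2))
    (lt_min hρ0 (by positivity))
  obtain ⟨hz₁norm, Φ₀, hΦ, hΦsup, hΦz₁, hpeak⟩ := hz₁mem
  have hz₁ball : z₁ ∈ closedBall (0 : StrongDual ℂ X) 1 := by
    simp [mem_closedBall_zero_iff, hz₁norm.le]
  have hz₁x₀ : ‖z₁ - x₀‖ < min ρ (ε/2) := by
    rw [← dist_eq_norm, dist_comm]; exact hz₁d
  have hfz₁d : ‖f x₀ - f z₁‖ < ε/64 := by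
    rw [← dist_eq_norm, dist_comm]
    exact hρ hz₁ball (by rw [dist_eq_norm]; exact hz₁x₀.trans_le (min_le_left _ _))
  have hfx₀le : ‖f x₀‖ ≤ 1 := hfsup ▸ awsu_norm_le_supNorm hf.1 hx₀ball
  have hfz₁ : 1 - ε/32 < ‖f z₁‖ := by
    have h1 : ‖f x₀‖ - ‖f z₁‖ ≤ ‖f x₀ - f z₁‖ := norm_sub_norm_le _ _
    linarith
  -- peak data at scale ε/4
  obtain ⟨c, hc1, hcb⟩ := hpeak (ε/4) (by positivity)
  set c' : ℝ := max c 0 with hc'def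
  have hc'1 : c' < 1 := max_lt hc1 one_pos
  have hc'0 : (0:ℝ) ≤ c' := le_max_right _ _
  obtain ⟨M, hM⟩ := exists_pow_lt_of_lt_one (by norm_num : (0:ℝ) < 1/2) hc'1
  set n : ℝ := ‖f z₁‖ with hn
  have hn0 : 0 < n := by rw [hn]; nlinarith
  have hfz₁0 : f z₁ ≠ 0 := by
    intro h; rw [hn, h, norm_zero] at hn0; exact lt_irrefl _ hn0
  set P : ℂ := (Φ₀ z₁) ^ M with hPdef
  have hPnorm : ‖P‖ = 1 := by rw [hPdef, norm_pow, hΦz₁, one_pow]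
  have hP0 : P ≠ 0 := by
    intro h; rw [h, norm_zero] at hPnorm; norm_num at hPnorm
  set u : Y := (P⁻¹ * (n:ℂ)⁻¹) • f z₁ with hudef
  have hu : ‖u‖ = 1 := by
    rw [hudef, norm_smul, norm_mul, norm_inv, norm_inv, hPnorm, Complex.norm_real,
      Real.norm_eq_abs, abs_of_pos hn0, ← hn]
    field_simp
  set t : ℝ := ε/8 with htdef
  have ht0 : 0 < t := by positivity
  set g₀ : StrongDual ℂ X → Y := fun y => f y + ((t:ℂ) * (Φ₀ y)^M) • u with hg₀def
  have hg₀cont : ContinuousOn (fun φ : WeakDual ℂ X => g₀ (WeakDual.toStrongDual φ))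
      {φ : WeakDual ℂ X | ‖WeakDual.toStrongDual φ‖ ≤ 1} := by
    simp only [hg₀def]
    exact hf.1.add ((continuousOn_const.mul (hΦ.1.pow M)).smul continuousOn_const)
  have hg₀diff : DifferentiableOn ℂ g₀ (ball (0 : StrongDual ℂ X) 1) := by
    simp only [hg₀def]
    exact hf.2.add (((hΦ.2.pow M).const_mul _).smul (differentiableOn_const u))
  have hfle : ∀ y ∈ closedBall (0 : StrongDual ℂ X) 1, ‖f y‖ ≤ 1 :=
    fun y hy => hfsup ▸ awsu_norm_le_supNorm hf.1 hy
  have hΦle : ∀ y ∈ closedBall (0 : StrongDual ℂ X) 1, ‖Φ₀ y‖ ≤ 1 :=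
    fun y hy => hΦsup ▸ awsu_norm_le_supNorm hΦ.1 hy
  have hpert : ∀ y : StrongDual ℂ X, ‖((t:ℂ) * (Φ₀ y)^M) • u‖ = t * ‖Φ₀ y‖^M := by
    intro y
    rw [norm_smul, hu, mul_one, norm_mul, norm_pow, Complex.norm_real, Real.norm_eq_abs,
      abs_of_pos ht0]
  have hg₀le : ∀ y ∈ closedBall (0 : StrongDual ℂ X) 1, ‖g₀ y‖ ≤ 1 + t := by
    intro y hy
    have h1 : ‖Φ₀ y‖^M ≤ 1 := pow_le_one₀ (norm_nonneg _) (hΦle y hy)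
    calc ‖g₀ y‖ ≤ ‖f y‖ + ‖((t:ℂ) * (Φ₀ y)^M) • u‖ := norm_add_le _ _
    _ ≤ 1 + t := by rw [hpert]; nlinarith [hfle y hy]
  have hg₀far : ∀ y ∈ closedBall (0 : StrongDual ℂ X) 1, ε/4 ≤ ‖y - z₁‖ →
      ‖g₀ y‖ ≤ 1 + t * c'^M := by
    intro y hy hfar
    have h1 : ‖Φ₀ y‖ ≤ c' := le_trans (hcb y hy hfar) (le_max_left _ _)
    have h2 : ‖Φ₀ y‖^M ≤ c'^M := pow_le_pow_left₀ (norm_nonneg _) h1 M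
    calc ‖g₀ y‖ ≤ ‖f y‖ + ‖((t:ℂ) * (Φ₀ y)^M) • u‖ := norm_add_le _ _
    _ ≤ 1 + t * c'^M := by rw [hpert]; nlinarith [hfle y hy]
  have hg₀z₁val : g₀ z₁ = (1 + (t:ℂ) * (n:ℂ)⁻¹) • f z₁ := by
    simp only [hg₀def, hudef, smul_smul, ← hPdef]
    rw [show (t:ℂ) * P * (P⁻¹ * (n:ℂ)⁻¹) = (P * P⁻¹) * ((t:ℂ) * (n:ℂ)⁻¹) by ring,
      mul_inv_cancel₀ hP0, one_mul]
    rw [add_smul, one_smul]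
  have hg₀z₁ : ‖g₀ z₁‖ = n + t := by
    rw [hg₀z₁val, norm_smul]
    rw [show (1 + (t:ℂ) * (n:ℂ)⁻¹) = (((1 + t/n : ℝ)) : ℂ) by push_cast; ring]
    rw [Complex.norm_real, Real.norm_eq_abs, abs_of_pos (by positivity), ← hn]
    field_simp
  -- the maximum of g₀
  obtain ⟨m, hmball, hmax⟩ := awsu_exists_max hg₀cont
  set S : ℝ := ‖g₀ m‖ with hSdef
  have hSn : n + t ≤ S := hg₀z₁ ▸ hmax z₁ hz₁ball
  have hSle : S ≤ 1 + t := hg₀le m hmball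
  have hS1 : 1 < S := by linarith
  have hS0 : (0:ℝ) < S := lt_trans one_pos hS1
  have hloc : ∀ w ∈ closedBall (0 : StrongDual ℂ X) 1, ‖g₀ w‖ = S → ‖w - z₁‖ < ε/4 := by
    intro w hw hwS
    by_contra hcon
    push_neg at hcon
    have h1 := hg₀far w hw hcon
    have h2 : t * c'^M < t * (1/2) := by
      exact mul_lt_mul_of_pos_left hM ht0
    linarith
  -- find the sphere point
  have hm1 : ‖m‖ ≤ 1 := mem_closedBall_zero_iff.1 hmball
  obtain ⟨w, hw1, hwm⟩ : ∃ w : StrongDual ℂ X, ‖w‖ = 1 ∧ ‖w - m‖ ≤ 1 - ‖m‖ := by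
    rcases eq_or_ne m 0 with rfl | hm0
    · exact ⟨x₀, hx₀, by simp [hx₀]⟩
    · have hmpos : 0 < ‖m‖ := norm_pos_iff.2 hm0
      refine ⟨((‖m‖ : ℂ))⁻¹ • m, ?_, ?_⟩
      · rw [norm_smul, norm_inv, Complex.norm_real, Real.norm_eq_abs, abs_of_pos hmpos,
          inv_mul_cancel₀ hmpos.ne']
      · have he : ((‖m‖ : ℂ))⁻¹ • m - m = (((‖m‖⁻¹ - 1 : ℝ)) : ℂ) • m := by
          rw [show ((((‖m‖⁻¹ - 1 : ℝ)) : ℂ)) = ((‖m‖ : ℂ))⁻¹ - 1 by push_cast; ring]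
          exact (congrArg (_ • m - ·) (one_smul ℂ m)).symm.trans (sub_smul _ _ _).symm
        have hinv : (1:ℝ) ≤ ‖m‖⁻¹ := by
          have h1 : ‖m‖ * ‖m‖⁻¹ = 1 := mul_inv_cancel₀ hmpos.ne'
          nlinarith [mul_nonneg (sub_nonneg.2 hm1) (inv_pos.2 hmpos).le]
        rw [he, norm_smul, Complex.norm_real, Real.norm_eq_abs, abs_of_nonneg (by linarith),
          sub_mul, inv_mul_cancel₀ hmpos.ne', one_mul]
  have hwball : w ∈ closedBall (0 : StrongDual ℂ X) 1 := by
    simp [mem_closedBall_zero_iff, hw1.le]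
  have hgw : ‖g₀ w‖ = S := by
    have hsub1 : ball m (1 - ‖m‖) ⊆ ball (0 : StrongDual ℂ X) 1 := by
      intro x hx
      rw [mem_ball, dist_eq_norm] at hx
      rw [mem_ball_zero_iff]
      calc ‖x‖ = ‖(x - m) + m‖ := by rw [sub_add_cancel]
      _ ≤ ‖x - m‖ + ‖m‖ := norm_add_le _ _
      _ < 1 := by linarith
    have hsub2 : closedBall m (1 - ‖m‖) ⊆ closedBall (0 : StrongDual ℂ X) 1 := by
      intro x hx
      rw [mem_closedBall, dist_eq_norm] at hx
      rw [mem_closedBall_zero_iff]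
      calc ‖x‖ = ‖(x - m) + m‖ := by rw [sub_add_cancel]
      _ ≤ ‖x - m‖ + ‖m‖ := norm_add_le _ _
      _ ≤ 1 := by linarith
    have hd : DiffContOnCl ℂ g₀ (ball m (1 - ‖m‖)) :=
      ⟨hg₀diff.mono hsub1, (awsu_continuousOn hg₀cont).mono
        ((closure_ball_subset_closedBall).trans hsub2)⟩
    have hmaxon : IsMaxOn (norm ∘ g₀) (ball m (1 - ‖m‖)) m :=
      isMaxOn_iff.2 fun y hy => hmax y (hsub2 (ball_subset_closedBall hy))
    have heq := Complex.norm_eqOn_closedBall_of_isMaxOn hd hmaxon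
      (by rw [mem_closedBall, dist_eq_norm]; exact hwm)
    simpa using heq
  have hwz₁ : ‖w - z₁‖ < ε/4 := hloc w hwball hgw
  -- the final function
  have hnorm_smul : ∀ y : StrongDual ℂ X, ‖((S:ℂ))⁻¹ • g₀ y‖ = S⁻¹ * ‖g₀ y‖ := by
    intro y
    rw [norm_smul, norm_inv, Complex.norm_real, Real.norm_eq_abs, abs_of_pos hS0]
  refine ⟨fun y => ((S:ℂ))⁻¹ • g₀ y, w, ⟨?_, ?_⟩, ?_, hw1, ?_, ?_, ?_⟩
  · exact hg₀cont.const_smul _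
  · exact hg₀diff.const_smul _
  · -- supNorm = 1
    rw [supNorm_eq_of_max hmball (fun y hy => by
      rw [hnorm_smul, hnorm_smul]
      exact mul_le_mul_of_nonneg_left (hmax y hy) (inv_nonneg.2 hS0.le))]
    rw [hnorm_smul, ← hSdef]
    exact inv_mul_cancel₀ hS0.ne'
  · rw [hnorm_smul, hgw]; exact inv_mul_cancel₀ hS0.ne'
  · -- supNorm of difference
    have hSinv1 : S⁻¹ ≤ 1 := by
      rw [inv_le_one_iff₀]; right; exact hS1.le
    have hSinv0 : 0 < S⁻¹ := inv_pos.2 hS0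
    have hSS : S⁻¹ * S = 1 := inv_mul_cancel₀ hS0.ne'
    have key : ∀ y ∈ closedBall (0 : StrongDual ℂ X) 1, ‖((S:ℂ))⁻¹ • g₀ y - f y‖ ≤ ε/4 := by
      intro y hy
      have e1 : ((S:ℂ))⁻¹ • g₀ y - f y = (((S:ℂ))⁻¹ - 1) • g₀ y + (g₀ y - f y) := by
        rw [sub_smul, one_smul]; abel
      have h3 : ‖(((S:ℂ))⁻¹ - 1) • g₀ y‖ ≤ S - 1 := by
        rw [norm_smul, show ((S:ℂ))⁻¹ - 1 = (((S⁻¹ - 1 : ℝ)) : ℂ) by push_cast; ring,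
          Complex.norm_real, Real.norm_eq_abs, abs_of_nonpos (by linarith), neg_sub]
        have h5 : ‖g₀ y‖ ≤ S := hmax y hy
        nlinarith [norm_nonneg (g₀ y)]
      have h4 : ‖g₀ y - f y‖ ≤ t := by
        have e2 : g₀ y - f y = ((t:ℂ) * (Φ₀ y)^M) • u := by
          simp only [hg₀def]; abel
        rw [e2, hpert]
        nlinarith [pow_le_one₀ (n := M) (norm_nonneg (Φ₀ y)) (hΦle y hy)]
      calc ‖((S:ℂ))⁻¹ • g₀ y - f y‖ = ‖(((S:ℂ))⁻¹ - 1) • g₀ y + (g₀ y - f y)‖ := by rw [e1]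
      _ ≤ ‖(((S:ℂ))⁻¹ - 1) • g₀ y‖ + ‖g₀ y - f y‖ := norm_add_le _ _
      _ ≤ (S - 1) + t := add_le_add h3 h4
      _ ≤ ε/4 := by linarith
    haveI : Nonempty (closedBall (0 : StrongDual ℂ X) 1) := ⟨⟨0, by simp⟩⟩
    have h5 : supNorm (fun y => ((S:ℂ))⁻¹ • g₀ y - f y) ≤ ε/4 :=
      ciSup_le fun x => key x x.2
    exact lt_of_le_of_lt h5 (by linarith)
  · -- distance of points
    have h6 : ‖w - x₀‖ ≤ ‖w - z₁‖ + ‖z₁ - x₀‖ := by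
      calc ‖w - x₀‖ = ‖(w - z₁) + (z₁ - x₀)‖ := by rw [sub_add_sub_cancel]
      _ ≤ _ := norm_add_le _ _
    have h7 : ‖z₁ - x₀‖ < ε/2 := hz₁x₀.trans_le (min_le_right _ _)
    linarith
end
end

section
/- Let K be a nonempty compact Hausdorff space and let A be a unital uniform algebra on K, i.e. a closed subalgebra of C(K, ℂ) containing the constant functions, and let Γ₀ denote the set of strong peak points of A. Then for any open subset U of K with U ∩ Γ₀ ≠ ∅ and for any 0 < ε < 1, there exist f ∈ A and t₀ ∈ U ∩ Γ₀ satisfying: (i) f(t₀) = ‖f‖∞ = 1; (ii) |f(t)| < ε for every t ∈ K \ U; and (iii) |f(t)| + (1 − ε)|1 − f(t)| ≤ 1 for every t ∈ K. -/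
open Metric

noncomputable section

variable {K : Type*} [TopologicalSpace K] [CompactSpace K]

/-- `t` is a strong peak point of the uniform algebra `A ⊆ C(K, ℂ)`: some `f ∈ A` with
`‖f‖∞ = |f t| = 1` peaks strongly at `t`, i.e. its modulus stays bounded away from `1`
off any open neighborhood of `t`. -/
def IsStrongPeakPt (A : Subalgebra ℂ C(K, ℂ)) (t : K) : Prop :=
  ∃ f ∈ A, ‖f‖ = 1 ∧ ‖f t‖ = 1 ∧
    ∀ W : Set K, IsOpen W → t ∈ W → ∃ c < 1, ∀ s ∉ W, ‖f s‖ ≤ c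

section Helpers

open Complex Filter
open scoped NNReal ENNReal

private lemma div_two_re (x : ℂ) : (x/2).re = x.re/2 := by
  simp [Complex.div_re, Complex.normSq]

private lemma re_cpow_aux {α : ℝ} (hα : 0 < α) (hαle : α * (Real.pi/2) ≤ Real.pi)
    {b : ℂ} (hb : b ≠ 0) (hre : 0 ≤ b.re) :
    ‖b ^ (α:ℂ)‖ = ‖b‖ ^ α ∧
    Real.cos (α * (Real.pi/2)) * ‖b ^ (α:ℂ)‖ ≤ (b ^ (α:ℂ)).re := by
  have habs : 0 < ‖b‖ := norm_pos_iff.2 hb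
  rw [Complex.cpow_def_of_ne_zero hb]
  have him : (Complex.log b * (α:ℂ)).im = α * b.arg := by
    simp [Complex.mul_im, Complex.log_im]; ring
  have hre' : (Complex.log b * (α:ℂ)).re = Real.log ‖b‖ * α := by
    simp [Complex.mul_re, Complex.log_re]
  constructor
  · rw [Complex.norm_exp, hre', Real.rpow_def_of_pos habs]
  · rw [Complex.norm_exp, Complex.exp_re, him]
    have h1 : |b.arg| ≤ Real.pi/2 := Complex.abs_arg_le_pi_div_two_iff.2 hre
    have h2 : Real.cos (α * (Real.pi/2)) ≤ Real.cos (α * b.arg) := by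
      rw [← Real.cos_abs (α * b.arg)]
      apply Real.cos_le_cos_of_nonneg_of_le_pi (abs_nonneg _) hαle
      rw [abs_mul, abs_of_pos hα]
      calc α * |b.arg| ≤ α * (Real.pi/2) := mul_le_mul_of_nonneg_left h1 hα.le
      _ ≤ α * (Real.pi/2) := le_refl _
    nlinarith [Real.exp_pos ((Complex.log b * (α:ℂ)).re), Real.neg_one_le_cos (α * b.arg),
      Real.cos_le_one (α * (Real.pi/2))]

private lemma stolz_mem {ε : ℝ} (hε0 : 0 < ε) (hε1 : ε < 1) {w : ℂ}
    (hw : ‖w‖ ≤ ε) (hre : (1 - ε/2) * ‖w‖ ≤ w.re) :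
    ‖1 - w‖ + (1 - ε) * ‖w‖ ≤ 1 := by
  set m := ‖w‖ with hm
  have hm0 : 0 ≤ m := norm_nonneg w
  have hrm : w.re ≤ m := by rw [hm]; exact Complex.re_le_norm w
  have hsq : ‖1 - w‖ ^ 2 = 1 - 2 * w.re + m ^ 2 := by
    rw [hm, Complex.sq_norm, Complex.sq_norm,
      Complex.normSq_apply, Complex.normSq_apply]
    simp [Complex.sub_re, Complex.sub_im]
    ring
  have hy : 0 ≤ 1 - w.re + m^2/2 := by nlinarith
  have hx2 : ‖1 - w‖^2 ≤ (1 - w.re + m^2/2)^2 := by nlinarith [sq_nonneg (w.re - m^2/2)]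
  have hxy : ‖1 - w‖ ≤ 1 - w.re + m^2/2 := by
    have := Real.sqrt_le_sqrt hx2
    rwa [Real.sqrt_sq (norm_nonneg _), Real.sqrt_sq hy] at this
  nlinarith

private lemma stolz_small {ε η : ℝ} (hε1 : ε < 1) {w : ℂ}
    (hw : ‖w‖ ≤ ε) (hre : (1 - ε/2) * ‖w‖ ≤ w.re) (hη : η ≤ ‖w‖) :
    ‖1 - w‖ ≤ Real.sqrt (1 - 2*(1-ε)*η) := by
  set m := ‖w‖ with hm
  have hm0 : 0 ≤ m := norm_nonneg w
  have hsq : ‖1 - w‖ ^ 2 = 1 - 2 * w.re + m ^ 2 := by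
    rw [hm, Complex.sq_norm, Complex.sq_norm,
      Complex.normSq_apply, Complex.normSq_apply]
    simp [Complex.sub_re, Complex.sub_im]
    ring
  rw [← Real.sqrt_sq (norm_nonneg (1 - w))]
  apply Real.sqrt_le_sqrt
  nlinarith [mul_nonneg (sub_nonneg.2 hη) (by linarith : (0:ℝ) ≤ 2 - 2*ε),
    mul_nonneg hm0 (sub_nonneg.2 hw)]

private lemma stolz_pow {ε : ℝ} (hε1 : ε ≤ 1) {v : ℂ} (hv : ‖v‖ + (1-ε)*‖1-v‖ ≤ 1) (n : ℕ) :
    ‖v^n‖ + (1-ε)*‖1-v^n‖ ≤ 1 := by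
  have h0 : 0 ≤ (1-ε)*‖1-v‖ := mul_nonneg (by linarith) (norm_nonneg _)
  have hv1 : ‖v‖ ≤ 1 := by linarith
  have key : 1 - v^n = (1 - v) * ∑ k ∈ Finset.range n, v^k := by
    have h := geom_sum_mul v n
    linear_combination h
  have h2 : ‖1 - v^n‖ ≤ ‖1-v‖ * ∑ k ∈ Finset.range n, ‖v‖^k := by
    rw [key, norm_mul]
    gcongr
    calc ‖∑ k ∈ Finset.range n, v^k‖ ≤ ∑ k ∈ Finset.range n, ‖v^k‖ := norm_sum_le _ _
    _ = ∑ k ∈ Finset.range n, ‖v‖^k := by simp [norm_pow]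
  have hsum0 : 0 ≤ ∑ k ∈ Finset.range n, ‖v‖^k :=
    Finset.sum_nonneg fun k _ => pow_nonneg (norm_nonneg v) k
  have h4 : (1 - ‖v‖) * ∑ k ∈ Finset.range n, ‖v‖^k = 1 - ‖v‖^n := by
    have h := geom_sum_mul ‖v‖ n
    linear_combination -h
  have h5 : (1-ε)*‖1-v^n‖ ≤ 1 - ‖v‖^n := by
    calc (1-ε)*‖1-v^n‖ ≤ (1-ε)*(‖1-v‖ * ∑ k ∈ Finset.range n, ‖v‖^k) := by
          apply mul_le_mul_of_nonneg_left h2 (by linarith)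
    _ = ((1-ε)*‖1-v‖) * ∑ k ∈ Finset.range n, ‖v‖^k := by ring
    _ ≤ (1 - ‖v‖) * ∑ k ∈ Finset.range n, ‖v‖^k := by
          apply mul_le_mul_of_nonneg_right (by linarith) hsum0
    _ = 1 - ‖v‖^n := h4
  have : ‖v^n‖ = ‖v‖^n := norm_pow v n
  linarith

private lemma cpow_mem {K : Type*} [TopologicalSpace K] [CompactSpace K]
    (A : Subalgebra ℂ C(K,ℂ)) (hA : IsClosed (A : Set C(K,ℂ)))
    {g : C(K,ℂ)} (hg : g ∈ A) (hgle : ∀ t, ‖g t‖ ≤ 1) {α : ℝ} (hα0 : 0 < α) :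
    ∃ v ∈ A, ∀ t, v t = ((1 - g t)/2) ^ (α:ℂ) := by
  classical
  set cl : ℝ → ℝ := fun r => max 0 (min r 1) with hcl
  have hclcont : Continuous cl := continuous_const.max (continuous_id.min continuous_const)
  have hcl0 : ∀ r, 0 ≤ cl r := fun r => le_max_left _ _
  have hcl1 : ∀ r, cl r ≤ 1 := fun r => max_le (by norm_num) (min_le_right _ _)
  have hcleq : ∀ r, 0 ≤ r → r ≤ 1 → cl r = r := by
    intro r h0 h1
    rw [hcl]; simp [min_eq_left h1, max_eq_right h0]
  set β : ℝ × K → ℂ := fun p => (1 - (cl p.1 : ℂ) * g p.2)/2 with hβ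
  have hβcont : Continuous β := by
    apply Continuous.div_const
    exact continuous_const.sub
      ((Complex.continuous_ofReal.comp (hclcont.comp continuous_fst)).mul
        (g.continuous.comp continuous_snd))
  have hβre : ∀ p, 0 ≤ (β p).re := by
    intro p
    have h1 : |(g p.2).re| ≤ 1 := le_trans (Complex.abs_re_le_norm _) (hgle p.2)
    have h2 := hcl0 p.1
    have h3 := hcl1 p.1
    have : (β p).re = (1 - cl p.1 * (g p.2).re)/2 := by
      rw [hβ]
      simp [div_two_re, Complex.sub_re, Complex.re_ofReal_mul]
    rw [this]
    have := abs_le.1 h1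
    nlinarith
  have hFcont : Continuous (fun p : ℝ × K => (β p) ^ (α:ℂ)) := by
    rw [continuous_iff_continuousAt]
    intro p
    exact (Complex.continuousAt_cpow_const_of_re_pos (Or.inl (hβre p))
      (by simpa using hα0)).comp hβcont.continuousAt
  set F : C(ℝ × K, ℂ) := ⟨fun p => (β p) ^ (α:ℂ), hFcont⟩ with hF
  refine ⟨F.curry 1, ?_, ?_⟩
  · have htd : Filter.Tendsto F.curry (nhdsWithin 1 (Set.Iio 1)) (nhds (F.curry 1)) :=
      (F.curry.continuous.tendsto 1).mono_left nhdsWithin_le_nhds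
    apply hA.mem_of_tendsto htd
    filter_upwards [Ioo_mem_nhdsLT_of_mem (by norm_num : (1:ℝ) ∈ Set.Ioc 0 1)] with r hr
    obtain ⟨hr0, hr1⟩ := hr
    have hinv : 1 < r⁻¹ := by
      rw [inv_eq_one_div]; exact one_lt_one_div hr0 hr1
    set R₀ : ℝ := (1 + 3 * r⁻¹)/4 with hR₀
    set r₀ : ℝ := (1 + r⁻¹)/2 with hr₀
    have h1r₀ : 1 < r₀ := by rw [hr₀]; linarith
    have hr₀R₀ : r₀ < R₀ := by rw [hr₀, hR₀]; linarith
    have hR₀inv : R₀ < r⁻¹ := by rw [hR₀]; linarith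
    have hR₀pos : 0 < R₀ := by linarith
    have hr₀pos : 0 < r₀ := by linarith
    have hcoeR : (R₀.toNNReal : ℝ) = R₀ := Real.coe_toNNReal _ hR₀pos.le
    have hcoer : (r₀.toNNReal : ℝ) = r₀ := Real.coe_toNNReal _ hr₀pos.le
    have hdiff : DifferentiableOn ℂ (fun z : ℂ => ((1 - (r:ℂ)*z)/2) ^ (α:ℂ))
        (Metric.closedBall 0 R₀.toNNReal) := by
      intro z hz
      apply DifferentiableAt.differentiableWithinAt
      have hzr : ‖z‖ ≤ R₀ := by
        rw [Metric.mem_closedBall, dist_zero_right] at hz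
        rw [← hcoeR]; exact_mod_cast hz
      apply DifferentiableAt.cpow
      · exact ((differentiableAt_const _).sub
          ((differentiableAt_const _).mul differentiableAt_id)).div_const _
      · exact differentiableAt_const _
      · rw [Complex.mem_slitPlane_iff]; left
        have : ((1 - (r:ℂ)*z)/2).re = (1 - r * z.re)/2 := by
          simp [div_two_re, Complex.sub_re, Complex.re_ofReal_mul]
        rw [this]
        have hzre : z.re ≤ ‖z‖ := Complex.re_le_norm z
        have : r * z.re ≤ r * R₀ := by
          apply mul_le_mul_of_nonneg_left (le_trans hzre hzr) hr0.le
        have hrR : r * R₀ < 1 := by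
          have := mul_lt_mul_of_pos_left hR₀inv hr0
          rwa [mul_inv_cancel₀ hr0.ne'] at this
        linarith
    have hRpos' : (0:ℝ≥0) < R₀.toNNReal := by
      rw [← Real.toNNReal_zero]
      exact (Real.toNNReal_lt_toNNReal_iff hR₀pos).2 hR₀pos
    have hser := hdiff.hasFPowerSeriesOnBall hRpos'
    have hlt : (r₀.toNNReal : ℝ≥0∞) < (R₀.toNNReal : ℝ≥0∞) := by
      rw [ENNReal.coe_lt_coe]
      exact (Real.toNNReal_lt_toNNReal_iff hR₀pos).2 hr₀R₀
    have hTU := hser.tendstoUniformlyOn hlt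
    set p := cauchyPowerSeries (fun z : ℂ => ((1 - (r:ℂ)*z)/2) ^ (α:ℂ)) 0 R₀.toNNReal with hp
    set Q : ℕ → C(K,ℂ) := fun n => ∑ k ∈ Finset.range n, p.coeff k • g^k with hQ
    have hQA : ∀ n, Q n ∈ A := fun n =>
      Subalgebra.sum_mem A fun k _ => Subalgebra.smul_mem A (pow_mem hg k) _
    have hQapp : ∀ n t, Q n t = p.partialSum n (g t) := by
      intro n t
      rw [hQ]
      simp [FormalMultilinearSeries.partialSum,
        FormalMultilinearSeries.apply_eq_pow_smul_coeff, smul_eq_mul, mul_comm]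
    have hFr : ∀ t, F.curry r t = ((1 - (r:ℂ) * g t)/2) ^ (α:ℂ) := by
      intro t
      rw [ContinuousMap.curry_apply]
      show (β (r,t)) ^ (α:ℂ) = _
      rw [hβ]
      simp only []
      rw [hcleq r hr0.le hr1.le]
    have htQ : Filter.Tendsto Q atTop (nhds (F.curry r)) := by
      rw [Metric.tendsto_atTop]
      intro δ hδ
      rw [Metric.tendstoUniformlyOn_iff] at hTU
      obtain ⟨N, hN⟩ := (hTU (δ/2) (half_pos hδ)).exists_forall_of_atTop
      refine ⟨N, fun n hn => ?_⟩
      have hle : dist (Q n) (F.curry r) ≤ δ/2 := by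
        rw [ContinuousMap.dist_le (half_pos hδ).le]
        intro t
        have hgt : g t ∈ Metric.ball (0:ℂ) r₀.toNNReal := by
          rw [Metric.mem_ball, dist_zero_right, hcoer]
          exact lt_of_le_of_lt (hgle t) h1r₀
        have h := hN n hn (g t) hgt
        rw [hQapp n t, hFr t, dist_comm]
        rw [zero_add] at h
        exact h.le
      linarith
    exact hA.mem_of_tendsto htQ (Filter.Eventually.of_forall hQA)
  · intro t
    rw [ContinuousMap.curry_apply]
    show (β (1, t)) ^ (α:ℂ) = _
    rw [hβ]
    simp only []
    rw [hcleq 1 zero_le_one le_rfl, Complex.ofReal_one, one_mul]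

private lemma w_facts {ε α : ℝ} (hε0 : 0 < ε) (hα0 : 0 < α)
    (hαle : α * (Real.pi/2) ≤ Real.pi) (hcos : 1 - ε/2 ≤ Real.cos (α * (Real.pi/2)))
    {z : ℂ} (hz : ‖z‖ ≤ 1) :
    ‖(ε:ℂ) * ((1 - z)/2) ^ (α:ℂ)‖ ≤ ε ∧
    (1 - ε/2) * ‖(ε:ℂ) * ((1 - z)/2) ^ (α:ℂ)‖ ≤ ((ε:ℂ) * ((1 - z)/2) ^ (α:ℂ)).re ∧
    (∀ c', ‖z‖ ≤ c' → c' < 1 → ε * ((1-c')/2) ^ α ≤ ‖(ε:ℂ) * ((1 - z)/2) ^ (α:ℂ)‖) := by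
  set b : ℂ := (1 - z)/2 with hb
  by_cases hb0 : b = 0
  · have hz1 : z = 1 := by
      have : 1 - z = 0 := by
        rw [hb] at hb0
        linear_combination 2 * hb0
      linear_combination -this
    rw [hb0, Complex.zero_cpow (by exact_mod_cast hα0.ne' : (α:ℂ) ≠ 0)]
    refine ⟨by simpa using hε0.le, by simp, ?_⟩
    intro c' hc1 hc2
    rw [hz1] at hc1
    simp at hc1
    linarith
  · have hbre : 0 ≤ b.re := by
      rw [hb]
      have h1 : ((1 - z)/2).re = (1 - z.re)/2 := by simp [div_two_re, Complex.sub_re]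
      rw [h1]
      have h2 : z.re ≤ 1 := le_trans (Complex.re_le_norm z) hz
      linarith
    obtain ⟨hnorm, hre⟩ := re_cpow_aux hα0 hαle hb0 hbre
    have hwnorm : ‖(ε:ℂ) * b ^ (α:ℂ)‖ = ε * ‖b‖ ^ α := by
      rw [norm_mul, hnorm, Complex.norm_real, Real.norm_of_nonneg hε0.le]
    have habs1 : ‖b‖ ≤ 1 := by
      rw [hb, norm_div]
      have : ‖1 - z‖ ≤ 2 := by
        calc ‖1 - z‖ ≤ ‖(1:ℂ)‖ + ‖z‖ := norm_sub_le _ _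
        _ ≤ 2 := by
              rw [norm_one]
              linarith
      rw [show ‖(2:ℂ)‖ = 2 by norm_num]
      linarith
    have hα1 : ‖b‖ ^ α ≤ 1 := Real.rpow_le_one (norm_nonneg b) habs1 hα0.le
    have hαnn : (0:ℝ) ≤ ‖b‖ ^ α := Real.rpow_nonneg (norm_nonneg b) α
    refine ⟨?_, ?_, ?_⟩
    · rw [hwnorm]; nlinarith
    · have hre2 : ((ε:ℂ) * b ^ (α:ℂ)).re = ε * (b ^ (α:ℂ)).re := Complex.re_ofReal_mul _ _
      rw [hre2, hwnorm]
      have h3 := mul_le_mul_of_nonneg_left hre hε0.le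
      have h4 : (1 - ε/2) * (ε * ‖b‖ ^ α) ≤ Real.cos (α * (Real.pi/2)) * (ε * ‖b‖ ^ α) := by
        apply mul_le_mul_of_nonneg_right hcos (by positivity)
      calc (1 - ε/2) * (ε * ‖b‖ ^ α) ≤ Real.cos (α * (Real.pi/2)) * (ε * ‖b‖ ^ α) := h4
      _ = ε * (Real.cos (α * (Real.pi/2)) * ‖b ^ (α:ℂ)‖) := by rw [hnorm]; ring
      _ ≤ ε * (b ^ (α:ℂ)).re := h3
    · intro c' hc1 hc2
      rw [hwnorm]
      have hble : (1 - c')/2 ≤ ‖b‖ := by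
        rw [hb, norm_div]
        rw [show ‖(2:ℂ)‖ = 2 by norm_num]
        have h5 : 1 - ‖z‖ ≤ ‖1 - z‖ := by
          have h := norm_sub_norm_le (1:ℂ) z
          simpa using h
        have h6 : ‖z‖ ≤ c' := hc1
        linarith
      have := Real.rpow_le_rpow (by linarith : (0:ℝ) ≤ (1-c')/2) hble hα0.le
      nlinarith

end Helpers

/-- Urysohn-type lemma for unital uniform algebras (Lemma 2.7 of Cascales-Guirao-Kadets). -/
theorem urysohn_uniform_algebra (K : Type*) [TopologicalSpace K] [CompactSpace K]
    [T2Space K] [Nonempty K]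
    (A : Subalgebra ℂ C(K, ℂ)) (hA : IsClosed (A : Set C(K, ℂ)))
    (U : Set K) (hU : IsOpen U) (hUΓ : ∃ t ∈ U, IsStrongPeakPt A t)
    (ε : ℝ) (hε0 : 0 < ε) (hε1 : ε < 1) :
    ∃ f ∈ A, ∃ t₀ ∈ U, IsStrongPeakPt A t₀ ∧
      f t₀ = 1 ∧ ‖f‖ = 1 ∧
      (∀ t ∉ U, ‖f t‖ < ε) ∧
      (∀ t : K, ‖f t‖ + (1 - ε) * ‖1 - f t‖ ≤ 1) := by
  obtain ⟨t₀, ht₀U, hpeak⟩ := hUΓ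
  obtain ⟨g₀, hg₀A, hg₀n, hg₀t, hg₀pk⟩ := hpeak
  set lam : ℂ := starRingEnd ℂ (g₀ t₀) with hlam
  set g : C(K,ℂ) := lam • g₀ with hgdef
  have hgA : g ∈ A := A.smul_mem hg₀A lam
  have hlamnorm : ‖lam‖ = 1 := by rw [hlam, RCLike.norm_conj]; exact hg₀t
  have hgnorm : ∀ t, ‖g t‖ = ‖g₀ t‖ := by
    intro t
    rw [hgdef]
    simp only [ContinuousMap.smul_apply, smul_eq_mul, norm_mul, hlamnorm, one_mul]
  have hgle : ∀ t, ‖g t‖ ≤ 1 := fun t => by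
    rw [hgnorm]
    calc ‖g₀ t‖ ≤ ‖g₀‖ := ContinuousMap.norm_coe_le_norm _ _
    _ = 1 := hg₀n
  have hgt₀ : g t₀ = 1 := by
    rw [hgdef]
    simp only [ContinuousMap.smul_apply, smul_eq_mul, hlam]
    rw [mul_comm, Complex.mul_conj, Complex.normSq_eq_norm_sq, hg₀t]
    norm_num
  obtain ⟨c, hc1, hcb⟩ := hg₀pk U hU ht₀U
  set c' : ℝ := max c 0 with hc'
  have hc'0 : 0 ≤ c' := le_max_right _ _
  have hc'1 : c' < 1 := max_lt hc1 one_pos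
  have hgoff : ∀ t ∉ U, ‖g t‖ ≤ c' := fun t ht => by
    rw [hgnorm]; exact le_trans (hcb t ht) (le_max_left _ _)
  -- parameters
  set sε := Real.sqrt ε with hsε
  have hsε0 : 0 < sε := Real.sqrt_pos.2 hε0
  have hsε1 : sε < 1 := (Real.sqrt_lt' one_pos).2 (by norm_num; exact hε1)
  have hπ := Real.pi_pos
  set α : ℝ := 2 * sε / Real.pi with hα
  have hα0 : 0 < α := by positivity
  have hαπ : α * (Real.pi/2) = sε := by rw [hα]; field_simp
  have hαle : α * (Real.pi/2) ≤ Real.pi := by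
    rw [hαπ]; linarith [Real.pi_gt_three]
  have hcos : 1 - ε/2 ≤ Real.cos (α * (Real.pi/2)) := by
    rw [hαπ]
    have h := Real.one_sub_sq_div_two_le_cos (x := sε)
    rwa [hsε, Real.sq_sqrt hε0.le] at h
  obtain ⟨v, hvA, hvapp⟩ := cpow_mem A hA hgA hgle hα0
  set u : C(K,ℂ) := 1 - (ε:ℂ) • v with hu
  have huA : u ∈ A := A.sub_mem (A.one_mem) (A.smul_mem hvA _)
  have huapp : ∀ t, u t = 1 - (ε:ℂ) * ((1 - g t)/2) ^ (α:ℂ) := by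
    intro t
    rw [hu]
    simp only [ContinuousMap.sub_apply, ContinuousMap.one_apply, ContinuousMap.smul_apply,
      smul_eq_mul, hvapp t]
  have hwf : ∀ t, _ := fun t => w_facts (α := α) hε0 hα0 hαle hcos (hgle t)
  -- u in Stolz region
  have hmem : ∀ t, ‖u t‖ + (1 - ε) * ‖1 - u t‖ ≤ 1 := by
    intro t
    have h := hwf t
    rw [huapp t]
    have h1u : (1 : ℂ) - (1 - (ε:ℂ) * ((1 - g t)/2) ^ (α:ℂ)) = (ε:ℂ) * ((1 - g t)/2) ^ (α:ℂ) := by ring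
    rw [h1u]
    exact stolz_mem hε0 hε1 h.1 h.2.1
  have hule : ∀ t, ‖u t‖ ≤ 1 := by
    intro t
    have := hmem t
    have h0 : 0 ≤ (1 - ε) * ‖1 - u t‖ := mul_nonneg (by linarith) (norm_nonneg _)
    linarith
  have hut₀ : u t₀ = 1 := by
    have hz : ((1:ℂ) - 1)/2 = 0 := by norm_num
    rw [huapp t₀, hgt₀, hz, Complex.zero_cpow (by exact_mod_cast hα0.ne' : (α:ℂ) ≠ 0),
      mul_zero, sub_zero]
  -- off U bound
  set η : ℝ := ε * ((1-c')/2) ^ α with hη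
  have hη0 : 0 < η := by
    rw [hη]
    apply mul_pos hε0
    apply Real.rpow_pos_of_pos
    linarith
  set ρ : ℝ := Real.sqrt (1 - 2*(1-ε)*η) with hρ
  have hρ1 : ρ < 1 := by
    rw [hρ]
    apply (Real.sqrt_lt' one_pos).2
    nlinarith
  have hρ0 : 0 ≤ ρ := Real.sqrt_nonneg _
  have hoff : ∀ t ∉ U, ‖u t‖ ≤ ρ := by
    intro t ht
    have h := hwf t
    rw [huapp t]
    apply stolz_small hε1 h.1 h.2.1
    exact h.2.2 c' (hgoff t ht) hc'1
  obtain ⟨n, hn⟩ := exists_pow_lt_of_lt_one hε0 hρ1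
  refine ⟨u ^ n, pow_mem huA n, t₀, ht₀U, ⟨g₀, hg₀A, hg₀n, hg₀t, hg₀pk⟩, ?_, ?_, ?_, ?_⟩
  · rw [ContinuousMap.pow_apply, hut₀, one_pow]
  · apply le_antisymm
    · rw [ContinuousMap.norm_le _ zero_le_one]
      intro t
      rw [ContinuousMap.pow_apply, norm_pow]
      exact pow_le_one₀ (norm_nonneg _) (hule t)
    · have h := ContinuousMap.norm_coe_le_norm (u ^ n) t₀
      rw [ContinuousMap.pow_apply, hut₀, one_pow] at h
      simpa using h
  · intro t ht
    rw [ContinuousMap.pow_apply, norm_pow]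
    calc ‖u t‖ ^ n ≤ ρ ^ n := pow_le_pow_left₀ (norm_nonneg _) (hoff t ht) n
    _ < ε := hn
  · intro t
    rw [ContinuousMap.pow_apply]
    exact stolz_pow hε1.le (hmem t) n
end
end

section
/- Let X be a complex Banach space. If x₀* ∈ B_{X*} is a weak-*-strongly exposed point, then x₀* is a strong peak point for A_{w*u}(B_{X*}) with respect to the norm. -/
open NormedSpace Metric Filter Topology

noncomputable section

variable {X Y : Type*} [NormedAddCommGroup X] [NormedSpace ℂ X]
  [NormedAddCommGroup Y] [NormedSpace ℂ Y]

/-- `x₀` is a weak-*-strongly exposed point of `B_{X*}`: some norm-one `x ∈ X` exposes it,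
with the diameters of the slices `S(x, δ)` tending to `0` as `δ → 0⁺`. -/
def IsWStarStronglyExposed (x₀ : StrongDual ℂ X) : Prop :=
  ∃ x : X, ‖x‖ = 1 ∧ (x₀ x).re = 1 ∧
    Tendsto (fun δ : ℝ =>
        diam {y : StrongDual ℂ X | y ∈ closedBall (0 : StrongDual ℂ X) 1 ∧ 1 - δ < (y x).re})
      (𝓝[>] (0 : ℝ)) (𝓝 0)

/-- A weak-*-strongly exposed point of `B_{X*}` is a strong peak point for
`A_{w*u}(B_{X*})` with respect to the norm. -/
theorem wstar_strongly_exposed_is_norm_strong_peak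
    (X : Type*) [NormedAddCommGroup X] [NormedSpace ℂ X] [CompleteSpace X]
    (x₀ : StrongDual ℂ X) (hx₀ : x₀ ∈ closedBall (0 : StrongDual ℂ X) 1)
    (hexp : IsWStarStronglyExposed x₀) :
    IsNormStrongPeakPoint x₀ := by
  obtain ⟨x, hx, hre, hdiam⟩ := hexp
  have hx₀norm : ‖x₀‖ ≤ 1 := by simpa using hx₀
  have habs : ‖x₀ x‖ ≤ 1 := by
    have : ‖x₀ x‖ ≤ 1 := by
      calc ‖x₀ x‖ ≤ ‖x₀‖ * ‖x‖ := x₀.le_opNorm x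
      _ ≤ 1 := by rw [hx]; simpa using hx₀norm
    simpa using this
  have hns0 : Complex.normSq (x₀ x) ≤ 1 := by
    rw [← Complex.sq_norm]
    nlinarith [norm_nonneg (x₀ x)]
  have him : (x₀ x).im = 0 := by
    have h2 : Complex.normSq (x₀ x) = 1 + (x₀ x).im ^ 2 := by
      simp [Complex.normSq_apply, hre]; ring
    nlinarith [sq_nonneg (x₀ x).im]
  have hx₀x : x₀ x = 1 := by
    apply Complex.ext <;> simp [hre, him]
  set f : StrongDual ℂ X → ℂ := fun y => (1 + y x) / 2 with hf
  have hfval : f x₀ = 1 := by simp [hf, hx₀x]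
  have hnormf : ∀ y : StrongDual ℂ X, ‖f y‖ = ‖(1 : ℂ) + y x‖ / 2 := by
    intro y
    rw [hf]
    simp [norm_div]
  have hbound : ∀ y : StrongDual ℂ X, y ∈ closedBall (0 : StrongDual ℂ X) 1 → ‖f y‖ ≤ 1 := by
    intro y hy
    have hy1 : ‖y x‖ ≤ 1 := by
      calc ‖y x‖ ≤ ‖y‖ * ‖x‖ := y.le_opNorm x
      _ ≤ 1 := by rw [hx]; simpa using hy
    have h3 : ‖(1 : ℂ) + y x‖ ≤ 2 := by
      calc ‖(1 : ℂ) + y x‖ ≤ ‖(1 : ℂ)‖ + ‖y x‖ := norm_add_le _ _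
      _ ≤ 2 := by rw [norm_one]; linarith
    rw [hnormf]; linarith
  refine ⟨f, ⟨?_, ?_⟩, ?_, ?_, ?_⟩
  · -- weak-* continuity
    have : Continuous fun φ : WeakDual ℂ X => (1 + φ x) / 2 :=
      (continuous_const.add (WeakDual.eval_continuous x)).div_const 2
    exact this.continuousOn
  · -- holomorphy
    have h1 : Differentiable ℂ fun y : StrongDual ℂ X => y x :=
      (ContinuousLinearMap.apply ℂ ℂ x).differentiable
    have h2 : Differentiable ℂ f := by
      have hfe : f = fun y => (1 + y x) * (2:ℂ)⁻¹ := by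
        funext y; rw [hf]; ring
      rw [hfe]
      exact ((differentiable_const (1:ℂ)).add h1).mul_const _
    exact h2.differentiableOn
  · -- supNorm = 1
    haveI : Nonempty (closedBall (0 : StrongDual ℂ X) 1) := ⟨⟨x₀, hx₀⟩⟩
    have hbdd : BddAbove (Set.range fun y : closedBall (0 : StrongDual ℂ X) 1 => ‖f (y : StrongDual ℂ X)‖) := by
      refine ⟨1, ?_⟩
      rintro r ⟨⟨y, hy⟩, rfl⟩
      exact hbound y hy
    apply le_antisymm
    · exact ciSup_le fun ⟨y, hy⟩ => hbound y hy
    · have := le_ciSup hbdd (⟨x₀, hx₀⟩ : closedBall (0 : StrongDual ℂ X) 1)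
      simpa [supNorm, hfval] using this
  · rw [hfval]; simp
  · -- strong peaking
    intro δ hδ
    have hev : ∀ᶠ ε in 𝓝[>] (0:ℝ),
        diam {y : StrongDual ℂ X | y ∈ closedBall (0 : StrongDual ℂ X) 1 ∧ 1 - ε < (y x).re} < δ :=
      hdiam.eventually (Filter.Tendsto.eventually_lt_const hδ tendsto_id)
    obtain ⟨ε, hεd, hε0⟩ := (hev.and self_mem_nhdsWithin).exists
    refine ⟨Real.sqrt (4 - 2 * ε) / 2, ?_, ?_⟩
    · rw [div_lt_one (by norm_num : (0:ℝ) < 2)]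
      have h4 : (4 : ℝ) - 2 * ε < 2 ^ 2 := by nlinarith
      exact (Real.sqrt_lt' (by norm_num)).2 h4
    · intro y hy hyδ
      have hyre : (y x).re ≤ 1 - ε := by
        by_contra h
        push_neg at h
        have hyS : y ∈ {y : StrongDual ℂ X | y ∈ closedBall (0 : StrongDual ℂ X) 1 ∧ 1 - ε < (y x).re} :=
          ⟨hy, h⟩
        have hx₀S : x₀ ∈ {y : StrongDual ℂ X | y ∈ closedBall (0 : StrongDual ℂ X) 1 ∧ 1 - ε < (y x).re} := by
          refine ⟨hx₀, ?_⟩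
          rw [hre]; linarith
        have hBdd : Bornology.IsBounded
            {y : StrongDual ℂ X | y ∈ closedBall (0 : StrongDual ℂ X) 1 ∧ 1 - ε < (y x).re} :=
          (isBounded_closedBall (x := (0 : StrongDual ℂ X)) (r := 1)).subset (fun z hz => hz.1)
        have hd := dist_le_diam_of_mem hBdd hyS hx₀S
        rw [dist_eq_norm] at hd
        linarith
      have hy1 : ‖y x‖ ≤ 1 := by
        have : ‖y x‖ ≤ 1 := by
          calc ‖y x‖ ≤ ‖y‖ * ‖x‖ := y.le_opNorm x
          _ ≤ 1 := by rw [hx]; simpa using hy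
        simpa using this
      have hns : Complex.normSq (y x) ≤ 1 := by
        rw [← Complex.sq_norm]
        nlinarith [norm_nonneg (y x)]
      have hsq : Complex.normSq (1 + y x) ≤ 4 - 2 * ε := by
        have heq : Complex.normSq (1 + y x) = 1 + 2 * (y x).re + Complex.normSq (y x) := by
          simp [Complex.normSq_apply]; ring
        rw [heq]
        linarith
      have habs2 : ‖1 + y x‖ ≤ Real.sqrt (4 - 2 * ε) := by
        rw [Complex.norm_def]
        exact Real.sqrt_le_sqrt hsq
      rw [hnormf]
      have : ‖(1 : ℂ) + y x‖ = ‖1 + y x‖ := rfl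
      rw [this]
      linarith
end
end

section
/- Let X be a complex Banach space, x₀ ∈ S_X and x₀* ∈ S_{X*} with Re x₀*(x₀) = 1, and suppose that for every sequence {xₙ*} ⊆ B_{X*} with Re xₙ*(x₀) → 1 one has ‖xₙ* − x₀*‖ → 0 (i.e. x₀ weak-*-strongly exposes x₀*). Then the function f : B_{X*} → ℂ defined by f(x*) = (1 + x*(x₀))/2 belongs to A_{w*u}(B_{X*}), satisfies ‖f‖∞ = f(x₀*) = 1, and is a strong peak function at x₀* with respect to the norm: every sequence {xₙ*} ⊆ B_{X*} with |f(xₙ*)| → 1 satisfies ‖xₙ* − x₀*‖ → 0. -/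
open NormedSpace Metric Filter Topology

noncomputable section

variable {X Y : Type*} [NormedAddCommGroup X] [NormedSpace ℂ X]
  [NormedAddCommGroup Y] [NormedSpace ℂ Y]

/-- If `x₀` weak-*-strongly exposes `x₀*`, then `f(x*) = (1 + x*(x₀))/2` belongs to
`A_{w*u}(B_{X*})`, has `‖f‖∞ = f(x₀*) = 1`, and is a strong peak function at `x₀*`
with respect to the norm. -/
theorem exposing_functional_gives_peak_function
    (X : Type*) [NormedAddCommGroup X] [NormedSpace ℂ X] [CompleteSpace X]
    (x₀ : X) (hx₀ : ‖x₀‖ = 1) (x₀' : StrongDual ℂ X) (hx₀' : ‖x₀'‖ = 1)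
    (hre : (x₀' x₀).re = 1)
    (hexp : ∀ x : ℕ → StrongDual ℂ X, (∀ n, ‖x n‖ ≤ 1) →
      Tendsto (fun n => ((x n) x₀).re) atTop (𝓝 1) →
      Tendsto (fun n => ‖x n - x₀'‖) atTop (𝓝 0)) :
    MemAwsu (fun x' : StrongDual ℂ X => (1 + x' x₀) / 2) ∧
    supNorm (fun x' : StrongDual ℂ X => (1 + x' x₀) / 2) = 1 ∧
    (1 + x₀' x₀) / 2 = 1 ∧
    ∀ x : ℕ → StrongDual ℂ X, (∀ n, ‖x n‖ ≤ 1) →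
      Tendsto (fun n => ‖(1 + (x n) x₀) / 2‖) atTop (𝓝 1) →
      Tendsto (fun n => ‖x n - x₀'‖) atTop (𝓝 0) := by
  -- basic bound: for x' in the ball, ‖x' x₀‖ ≤ 1
  have hbound : ∀ x' : StrongDual ℂ X, ‖x'‖ ≤ 1 → ‖x' x₀‖ ≤ 1 := by
    intro x' hx'
    calc ‖x' x₀‖ ≤ ‖x'‖ * ‖x₀‖ := x'.le_opNorm x₀
    _ ≤ 1 := by rw [hx₀]; simpa using hx'
  -- x₀' x₀ = 1
  have hz : x₀' x₀ = 1 := by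
    have h1 : ‖x₀' x₀‖ ≤ 1 := hbound x₀' (le_of_eq hx₀')
    have h2 : Complex.normSq (x₀' x₀) ≤ 1 := by
      have := Complex.sq_norm (x₀' x₀)
      nlinarith [norm_nonneg (x₀' x₀)]
    rw [Complex.normSq_apply, hre] at h2
    have him : (x₀' x₀).im = 0 := by nlinarith [sq_nonneg (x₀' x₀).im]
    exact Complex.ext (by simp [hre]) (by simp [him])
  have hfx₀' : (1 + x₀' x₀) / 2 = 1 := by rw [hz]; norm_num
  -- the key estimate for the peak part
  have key : ∀ x : ℕ → StrongDual ℂ X, (∀ n, ‖x n‖ ≤ 1) →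
      Tendsto (fun n => ‖(1 + (x n) x₀) / 2‖) atTop (𝓝 1) →
      Tendsto (fun n => ‖x n - x₀'‖) atTop (𝓝 0) := by
    intro x hx hT
    apply hexp x hx
    have hup : ∀ n, ((x n) x₀).re ≤ 1 := by
      intro n
      calc ((x n) x₀).re ≤ ‖(x n) x₀‖ := Complex.re_le_norm _
      _ ≤ 1 := by exact hbound _ (hx n)
    have hlow : ∀ n, 2 * (‖(1 + (x n) x₀) / 2‖ * ‖(1 + (x n) x₀) / 2‖) - 1
        ≤ ((x n) x₀).re := by
      intro n
      set z := (x n) x₀ with hzdef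
      have hz1 : ‖z‖ ≤ 1 := hbound _ (hx n)
      have h1 : ‖(1 + z) / 2‖ = ‖1 + z‖ / 2 := by
        rw [norm_div]; norm_num
      have h2 : ‖1 + z‖ * ‖1 + z‖ = Complex.normSq (1 + z) := by
        rw [← Complex.sq_norm]; ring
      have h3 : Complex.normSq (1 + z) = 1 + 2 * z.re + Complex.normSq z := by
        simp [Complex.normSq_apply]; ring
      have h4 : Complex.normSq z ≤ 1 := by
        rw [← Complex.sq_norm]
        nlinarith [norm_nonneg z]
      rw [h1]
      nlinarith [norm_nonneg (1 + z)]
    have hlowT : Tendsto (fun n => 2 * (‖(1 + (x n) x₀) / 2‖ * ‖(1 + (x n) x₀) / 2‖) - 1)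
        atTop (𝓝 1) := by
      have h := ((hT.mul hT).const_mul 2).sub_const 1
      convert h using 2
      norm_num
    exact tendsto_of_tendsto_of_tendsto_of_le_of_le hlowT tendsto_const_nhds
      hlow hup
  refine ⟨⟨?_, ?_⟩, ?_, hfx₀', key⟩
  · exact ((continuous_const.add (WeakDual.eval_continuous x₀)).div_const 2).continuousOn
  · have hd : Differentiable ℂ fun x' : StrongDual ℂ X => x' x₀ :=
      differentiable_id.clm_apply (differentiable_const x₀)
    have : Differentiable ℂ fun x' : StrongDual ℂ X => (1 + x' x₀) / 2 := by
      simp only [div_eq_mul_inv]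
      exact ((differentiable_const (1 : ℂ)).add hd).mul (differentiable_const _)
    exact this.differentiableOn
  · -- supNorm = 1
    have hmem : x₀' ∈ closedBall (0 : StrongDual ℂ X) 1 := by
      simp [mem_closedBall, hx₀']
    haveI : Nonempty (closedBall (0 : StrongDual ℂ X) 1) := ⟨⟨x₀', hmem⟩⟩
    apply le_antisymm
    · apply ciSup_le
      rintro ⟨x', hx'⟩
      have hx'1 : ‖x'‖ ≤ 1 := by simpa [mem_closedBall] using hx'
      have : ‖x' x₀‖ ≤ 1 := hbound x' hx'1
      calc ‖(1 + x' x₀) / 2‖ ≤ (‖(1 : ℂ)‖ + ‖x' x₀‖) / 2 := by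
            rw [norm_div]
            gcongr
            · exact norm_add_le _ _
            · norm_num
      _ ≤ 1 := by rw [norm_one]; linarith
    · have hb : BddAbove (Set.range fun x : closedBall (0 : StrongDual ℂ X) 1 =>
          ‖(1 + (x : StrongDual ℂ X) x₀) / 2‖) := by
        refine ⟨1, ?_⟩
        rintro r ⟨⟨x', hx'⟩, rfl⟩
        have hx'1 : ‖x'‖ ≤ 1 := by simpa [mem_closedBall] using hx'
        have : ‖x' x₀‖ ≤ 1 := hbound x' hx'1
        calc ‖(1 + x' x₀) / 2‖ ≤ (‖(1 : ℂ)‖ + ‖x' x₀‖) / 2 := by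
              rw [norm_div]
              gcongr
              · exact norm_add_le _ _
              · norm_num
        _ ≤ 1 := by rw [norm_one]; linarith
      have := le_ciSup hb (⟨x₀', hmem⟩ : closedBall (0 : StrongDual ℂ X) 1)
      simpa [supNorm, hfx₀'] using this
end
end

section
/- Let X be a reflexive complex Banach space whose dual X* is locally uniformly convex. Then Γ_s = S_{X*}, i.e. every point of the unit sphere of X* is a strong peak point for A_{w*u}(B_{X*}) with respect to the norm. -/
open NormedSpace Metric Filter Topology

noncomputable section

variable {X Y : Type*} [NormedAddCommGroup X] [NormedSpace ℂ X]
  [NormedAddCommGroup Y] [NormedSpace ℂ Y]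

/-- If `X` is a reflexive complex Banach space and `X*` is locally uniformly convex, then
every point of the unit sphere of `X*` is a strong peak point for `A_{w*u}(B_{X*})` with
respect to the norm, i.e. `Γ_s = S_{X*}`. -/
theorem reflexive_LUR_Gamma_s_eq_sphere
    (X : Type*) [NormedAddCommGroup X] [NormedSpace ℂ X] [CompleteSpace X]
    (hrefl : Function.Surjective (NormedSpace.inclusionInDoubleDual ℂ X))
    (hLUR : ∀ x : StrongDual ℂ X, ‖x‖ = 1 → ∀ y : ℕ → StrongDual ℂ X, (∀ n, ‖y n‖ ≤ 1) →
      Tendsto (fun n => ‖(2 : ℂ)⁻¹ • (x + y n)‖) atTop (𝓝 1) →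
      Tendsto (fun n => ‖y n - x‖) atTop (𝓝 0)) :
    ∀ x₀ : StrongDual ℂ X, ‖x₀‖ = 1 → IsNormStrongPeakPoint x₀ := by
  intro x₀ hx₀
  have hx₀ne : x₀ ≠ 0 := by
    intro h; rw [h] at hx₀; simp at hx₀
  obtain ⟨g, hg1, hg2⟩ := exists_dual_vector ℂ x₀ (norm_ne_zero_iff.mpr hx₀ne)
  obtain ⟨x, hx⟩ := hrefl g
  have hxval : x₀ x = 1 := by
    have h1 : inclusionInDoubleDual ℂ X x x₀ = x₀ x := NormedSpace.dual_def ℂ X x x₀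
    rw [hx, hg2, hx₀] at h1
    simpa using h1.symm
  have hxnorm : ‖x‖ = 1 := by
    have : ‖(NormedSpace.inclusionInDoubleDualLi ℂ (E := X)) x‖ = ‖x‖ :=
      (NormedSpace.inclusionInDoubleDualLi ℂ (E := X)).norm_map x
    have h2 : (NormedSpace.inclusionInDoubleDualLi ℂ (E := X)) x
        = inclusionInDoubleDual ℂ X x := rfl
    rw [h2, hx, hg1] at this
    exact this.symm
  -- the peaking function
  set f : StrongDual ℂ X → ℂ := fun y => (2 : ℂ)⁻¹ * (1 + y x) with hf
  have hfx₀ : f x₀ = 1 := by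
    simp [hf, hxval]; norm_num
  have hbound : ∀ y ∈ closedBall (0 : StrongDual ℂ X) 1, ‖f y‖ ≤ 1 := by
    intro y hy
    rw [mem_closedBall_zero_iff] at hy
    have h1 : ‖(1 : ℂ) + y x‖ ≤ 2 := by
      calc ‖(1 : ℂ) + y x‖ ≤ ‖(1 : ℂ)‖ + ‖y x‖ := norm_add_le _ _
        _ ≤ 1 + ‖y‖ * ‖x‖ := by
            simp only [norm_one]
            exact add_le_add_right (y.le_opNorm x) 1
        _ ≤ 2 := by rw [hxnorm]; linarith
    calc ‖f y‖ = ‖(2 : ℂ)⁻¹‖ * ‖(1 : ℂ) + y x‖ := norm_mul _ _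
      _ ≤ ‖(2 : ℂ)⁻¹‖ * 2 := by
          exact mul_le_mul_of_nonneg_left h1 (norm_nonneg _)
      _ = 1 := by norm_num
  -- key: ‖f y‖ ≤ ‖2⁻¹ • (x₀ + y)‖
  have hkey : ∀ y : StrongDual ℂ X, ‖f y‖ ≤ ‖(2 : ℂ)⁻¹ • (x₀ + y)‖ := by
    intro y
    have h1 : f y = ((2 : ℂ)⁻¹ • (x₀ + y)) x := by
      simp [hf, hxval, smul_eq_mul]; ring
    rw [h1]
    calc ‖((2 : ℂ)⁻¹ • (x₀ + y)) x‖ ≤ ‖(2 : ℂ)⁻¹ • (x₀ + y)‖ * ‖x‖ :=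
          ContinuousLinearMap.le_opNorm _ _
      _ = ‖(2 : ℂ)⁻¹ • (x₀ + y)‖ := by rw [hxnorm, mul_one]
  refine ⟨f, ⟨?_, ?_⟩, ?_, ?_, ?_⟩
  · -- weak-* continuity
    apply Continuous.continuousOn
    have : Continuous fun φ : WeakDual ℂ X => φ x := WeakDual.eval_continuous x
    exact continuous_const.mul (continuous_const.add this)
  · -- holomorphy
    apply Differentiable.differentiableOn
    have : Differentiable ℂ fun y : StrongDual ℂ X => y x :=
      (ContinuousLinearMap.apply ℂ ℂ x).differentiable
    exact (differentiable_const _).mul ((differentiable_const _).add this)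
  · -- sup norm = 1
    have hne : Nonempty (closedBall (0 : StrongDual ℂ X) 1) :=
      ⟨⟨0, mem_closedBall_self zero_le_one⟩⟩
    apply le_antisymm
    · exact ciSup_le fun y => hbound y y.2
    · have hmem : x₀ ∈ closedBall (0 : StrongDual ℂ X) 1 := by
        rw [mem_closedBall_zero_iff, hx₀]
      have hbdd : BddAbove (Set.range fun y : closedBall (0 : StrongDual ℂ X) 1 =>
          ‖f (y : StrongDual ℂ X)‖) := by
        refine ⟨1, ?_⟩
        rintro r ⟨y, rfl⟩
        exact hbound y y.2
      have := le_ciSup hbdd (⟨x₀, hmem⟩ : closedBall (0 : StrongDual ℂ X) 1)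
      simpa [supNorm, hfx₀] using this
  · rw [hfx₀]; norm_num
  · -- strong peaking
    intro δ hδ
    by_contra hcon
    push_neg at hcon
    have hseq : ∀ n : ℕ, ∃ y ∈ closedBall (0 : StrongDual ℂ X) 1,
        δ ≤ ‖y - x₀‖ ∧ 1 - 1 / (n + 1) < ‖f y‖ := by
      intro n
      have hlt : (1 : ℝ) - 1 / (n + 1) < 1 := by
        have : (0 : ℝ) < 1 / (n + 1) := by positivity
        linarith
      obtain ⟨y, hy1, hy2, hy3⟩ := hcon _ hlt
      exact ⟨y, hy1, hy2, hy3⟩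
    choose y hy1 hy2 hy3 using hseq
    have hynorm : ∀ n, ‖y n‖ ≤ 1 := fun n => mem_closedBall_zero_iff.mp (hy1 n)
    have hub : ∀ n, ‖(2 : ℂ)⁻¹ • (x₀ + y n)‖ ≤ 1 := by
      intro n
      calc ‖(2 : ℂ)⁻¹ • (x₀ + y n)‖ = ‖(2 : ℂ)⁻¹‖ * ‖x₀ + y n‖ := norm_smul _ _
        _ ≤ ‖(2 : ℂ)⁻¹‖ * (‖x₀‖ + ‖y n‖) :=
            mul_le_mul_of_nonneg_left (norm_add_le _ _) (norm_nonneg _)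
        _ ≤ ‖(2 : ℂ)⁻¹‖ * 2 := by
            apply mul_le_mul_of_nonneg_left _ (norm_nonneg _)
            rw [hx₀]; linarith [hynorm n]
        _ = 1 := by norm_num
    have hlb : ∀ n : ℕ, 1 - 1 / (n + 1 : ℝ) ≤ ‖(2 : ℂ)⁻¹ • (x₀ + y n)‖ := fun n =>
      le_trans (le_of_lt (hy3 n)) (hkey (y n))
    have htend : Tendsto (fun n : ℕ => ‖(2 : ℂ)⁻¹ • (x₀ + y n)‖) atTop (𝓝 1) := by
      have h1 : Tendsto (fun n : ℕ => 1 - 1 / (n + 1 : ℝ)) atTop (𝓝 1) := by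
        have := tendsto_one_div_add_atTop_nhds_zero_nat (𝕜 := ℝ)
        have h2 := (tendsto_const_nhds (x := (1 : ℝ)) (f := atTop (α := ℕ))).sub this
        simpa using h2
      exact tendsto_of_tendsto_of_tendsto_of_le_of_le h1 tendsto_const_nhds hlb hub
    have h0 := hLUR x₀ hx₀ y hynorm htend
    have : δ ≤ 0 := ge_of_tendsto' h0 fun n => hy2 n
    linarith
end
end

section
/- Let X be a complex Banach space whose dual X* is uniformly convex, and let Y be any complex Banach space. Then for every ε ∈ (0, 1) there exists η(ε) > 0 such that whenever f ∈ A_{w*u}(B_{X*}, Y) with ‖f‖∞ = 1 and x₀* ∈ S_{X*} satisfy ‖f(x₀*)‖_Y > 1 − η(ε), there exist g ∈ A_{w*u}(B_{X*}, Y) with ‖g‖∞ = 1 and x₁* ∈ S_{X*} such that ‖g(x₁*)‖_Y = 1, ‖g − f‖∞ < ε and ‖x₁* − x₀*‖ < ε. -/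
open NormedSpace Metric Filter Topology

noncomputable section

variable {X Y : Type*} [NormedAddCommGroup X] [NormedSpace ℂ X]
  [NormedAddCommGroup Y] [NormedSpace ℂ Y]

lemma MemAwsu.exists_max {f : StrongDual ℂ X → Y} (hf : MemAwsu f) :
    ∃ z : StrongDual ℂ X, ‖z‖ ≤ 1 ∧ ∀ y : StrongDual ℂ X, ‖y‖ ≤ 1 → ‖f y‖ ≤ ‖f z‖ := by
  have hKeq : {φ : WeakDual ℂ X | ‖WeakDual.toStrongDual φ‖ ≤ 1}
      = WeakDual.toStrongDual ⁻¹' closedBall (0 : StrongDual ℂ X) 1 := by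
    ext φ; simp [mem_closedBall_zero_iff]
  have hK : IsCompact {φ : WeakDual ℂ X | ‖WeakDual.toStrongDual φ‖ ≤ 1} := by
    rw [hKeq]; exact WeakDual.isCompact_closedBall (𝕜 := ℂ) (E := X) 0 1
  have hne : ({φ : WeakDual ℂ X | ‖WeakDual.toStrongDual φ‖ ≤ 1}).Nonempty :=
    ⟨0, by simp⟩
  obtain ⟨φ, hφ, hmax⟩ := hK.exists_isMaxOn hne hf.1.norm
  refine ⟨WeakDual.toStrongDual φ, hφ, fun y hy => ?_⟩
  exact hmax (show (StrongDual.toWeakDual y) ∈ _ from by simpa using hy)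

lemma supNorm_eq_max {f : StrongDual ℂ X → Y} {z : StrongDual ℂ X} (hz : ‖z‖ ≤ 1)
    (h : ∀ y : StrongDual ℂ X, ‖y‖ ≤ 1 → ‖f y‖ ≤ ‖f z‖) : supNorm f = ‖f z‖ := by
  have hne : Nonempty (closedBall (0 : StrongDual ℂ X) 1) :=
    ⟨⟨0, mem_closedBall_self zero_le_one⟩⟩
  refine le_antisymm (ciSup_le fun y => h y.1 (mem_closedBall_zero_iff.mp y.2)) ?_
  exact le_ciSup ⟨‖f z‖, Set.forall_mem_range.2 fun y => h y.1 (mem_closedBall_zero_iff.mp y.2)⟩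
    (⟨z, mem_closedBall_zero_iff.mpr hz⟩ : closedBall (0 : StrongDual ℂ X) 1)

lemma supNorm_le {f : StrongDual ℂ X → Y} {C : ℝ}
    (h : ∀ y : StrongDual ℂ X, ‖y‖ ≤ 1 → ‖f y‖ ≤ C) : supNorm f ≤ C := by
  have hne : Nonempty (closedBall (0 : StrongDual ℂ X) 1) :=
    ⟨⟨0, mem_closedBall_self zero_le_one⟩⟩
  exact ciSup_le fun y => h y.1 (mem_closedBall_zero_iff.mp y.2)

lemma MemAwsu.continuousOn_closedBall {f : StrongDual ℂ X → Y} (hf : MemAwsu f) :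
    ContinuousOn f (closedBall (0 : StrongDual ℂ X) 1) := by
  have : f = (fun φ : WeakDual ℂ X => f (WeakDual.toStrongDual φ))
      ∘ (fun y : StrongDual ℂ X => StrongDual.toWeakDual y) := rfl
  rw [this]
  exact hf.1.comp Dual.toWeakDual_continuous.continuousOn
    (fun y hy => by simpa using mem_closedBall_zero_iff.mp hy)

set_option maxHeartbeats 2000000 in
/-- Vector-valued Bishop-Phelps-Bollobás theorem for `A_{w*u}(B_{X*}, Y)` when the dual
`X*` is uniformly convex. -/
theorem bpb_Awsu_uniformly_convex_dual (X Y : Type*)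
    [NormedAddCommGroup X] [NormedSpace ℂ X] [CompleteSpace X]
    [UniformConvexSpace (StrongDual ℂ X)]
    [NormedAddCommGroup Y] [NormedSpace ℂ Y] [CompleteSpace Y] :
    ∀ ε ∈ Set.Ioo (0 : ℝ) 1, ∃ η > 0,
      ∀ f : StrongDual ℂ X → Y, MemAwsu f → supNorm f = 1 →
        ∀ x₀ : StrongDual ℂ X, ‖x₀‖ = 1 → 1 - η < ‖f x₀‖ →
          ∃ g : StrongDual ℂ X → Y, ∃ x₁ : StrongDual ℂ X, MemAwsu g ∧ supNorm g = 1 ∧ ‖x₁‖ = 1 ∧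
            ‖g x₁‖ = 1 ∧ supNorm (fun y => g y - f y) < ε ∧ ‖x₁ - x₀‖ < ε := by
  intro ε hε
  obtain ⟨ε0, ε1⟩ := hε
  obtain ⟨δ₀, δ₀pos, hδ₀⟩ :=
    exists_forall_closed_ball_dist_add_le_two_sub (StrongDual ℂ X) ε0
  set α : ℝ := ε / 4 with hα
  have αpos : 0 < α := by positivity
  set δ : ℝ := min δ₀ 1 with hδdef
  have δpos : 0 < δ := lt_min δ₀pos one_pos
  have δle1 : δ ≤ 1 := min_le_right _ _
  have δleδ₀ : δ ≤ δ₀ := min_le_left _ _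
  set δ' : ℝ := δ / 9 with hδ'
  have δ'pos : 0 < δ' := by positivity
  set η : ℝ := min (ε / 4) (α * δ / 9) with hη
  have ηpos : 0 < η := lt_min (by positivity) (by positivity)
  refine ⟨η, ηpos, ?_⟩
  intro f hf hfnorm x₀ hx₀ hfx₀
  have ηle : η ≤ ε / 4 := min_le_left _ _
  have ηle2 : η ≤ α * δ / 9 := min_le_right _ _
  have ηlt1 : η < 1 := lt_of_le_of_lt ηle (by linarith)
  -- bound on f
  have hfle : ∀ y : StrongDual ℂ X, ‖y‖ ≤ 1 → ‖f y‖ ≤ 1 := by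
    obtain ⟨z, hz, hmax⟩ := hf.exists_max
    intro y hy
    calc ‖f y‖ ≤ ‖f z‖ := hmax y hy
    _ = 1 := by rw [← supNorm_eq_max hz hmax, hfnorm]
  have hfx₀pos : (0 : ℝ) < ‖f x₀‖ := lt_of_lt_of_le (by linarith) hfx₀.le
  -- choose x' in B_X with re (x₀ x') > 1 - δ'
  obtain ⟨x', hx'le, hx're⟩ : ∃ x' : X, ‖x'‖ ≤ 1 ∧ 1 - δ' < (x₀ x').re := by
    obtain ⟨w, hw1, hw2⟩ := x₀.exists_lt_apply_of_lt_opNorm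
      (r := 1 - δ') (by rw [hx₀]; linarith)
    have hw0 : x₀ w ≠ 0 := by
      intro h0
      rw [h0] at hw2
      simp at hw2
      linarith
    refine ⟨((starRingEnd ℂ) (x₀ w) / (‖x₀ w‖ : ℂ)) • w, ?_, ?_⟩
    · rw [norm_smul]
      have : ‖(starRingEnd ℂ) (x₀ w) / (‖x₀ w‖ : ℂ)‖ = 1 := by
        rw [norm_div, RCLike.norm_conj]
        have hne : ‖x₀ w‖ ≠ 0 := norm_ne_zero_iff.mpr hw0
        rw [Complex.norm_real, Real.norm_eq_abs, abs_of_nonneg (norm_nonneg _)]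
        exact div_self hne
      rw [this, one_mul]; exact hw1.le
    · rw [map_smul]
      have hxw : ((starRingEnd ℂ) (x₀ w) / (‖x₀ w‖ : ℂ)) • x₀ w = (‖x₀ w‖ : ℂ) := by
        rw [smul_eq_mul, div_mul_eq_mul_div, Complex.conj_mul']
        norm_cast
        rw [sq]
        field_simp
      rw [hxw, Complex.ofReal_re]
      exact hw2
  -- the peak function P and perturbation G
  set v : Y := ((‖f x₀‖ : ℂ))⁻¹ • f x₀ with hv
  have hvnorm : ‖v‖ = 1 := by
    rw [hv, norm_smul, norm_inv, Complex.norm_real, Real.norm_eq_abs, abs_of_pos hfx₀pos]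
    exact inv_mul_cancel₀ hfx₀pos.ne'
  have hfx₀v : f x₀ = ((‖f x₀‖ : ℂ)) • v := by
    rw [hv, smul_smul, mul_inv_cancel₀, one_smul]
    exact_mod_cast hfx₀pos.ne'
  set P : StrongDual ℂ X → ℂ := fun y => ((α / 2 : ℝ) : ℂ) * (1 + y x') with hP
  have hPle : ∀ y : StrongDual ℂ X, ‖y‖ ≤ 1 → ‖P y‖ ≤ α := by
    intro y hy
    rw [hP]
    simp only [norm_mul, Complex.norm_real]
    rw [Real.norm_eq_abs, abs_of_pos (by positivity)]
    have : ‖(1 : ℂ) + y x'‖ ≤ 2 := by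
      calc ‖(1 : ℂ) + y x'‖ ≤ ‖(1:ℂ)‖ + ‖y x'‖ := norm_add_le _ _
      _ ≤ 1 + 1 := by
          gcongr
          · simp
          · calc ‖y x'‖ ≤ ‖y‖ * ‖x'‖ := y.le_opNorm x'
            _ ≤ 1 * 1 := mul_le_mul hy hx'le (norm_nonneg _) zero_le_one
            _ = 1 := one_mul 1
      _ = 2 := by norm_num
    nlinarith [norm_nonneg (P y)]
  set G : StrongDual ℂ X → Y := fun y => f y + P y • v with hG
  have hGmem : MemAwsu G := by
    constructor
    · apply hf.1.add
      apply Continuous.continuousOn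
      have h1 : Continuous fun φ : WeakDual ℂ X => (WeakDual.toStrongDual φ) x' :=
        WeakDual.eval_continuous x'
      exact ((continuous_const.mul (continuous_const.add h1)).smul continuous_const)
    · apply hf.2.add
      apply Differentiable.differentiableOn
      have h1 : Differentiable ℂ fun y : StrongDual ℂ X => y x' :=
        (ContinuousLinearMap.apply ℂ ℂ x').differentiable
      exact ((differentiable_const _).mul ((differentiable_const _).add h1)).smul_const v
  have hGle : ∀ y : StrongDual ℂ X, ‖y‖ ≤ 1 → ‖G y‖ ≤ 1 + α := by
    intro y hy
    calc ‖G y‖ ≤ ‖f y‖ + ‖P y • v‖ := norm_add_le _ _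
    _ ≤ 1 + α := by
        rw [norm_smul, hvnorm, mul_one]
        exact add_le_add (hfle y hy) (hPle y hy)
  -- lower bound at x₀
  have hre : ∀ y : StrongDual ℂ X, (P y).re = (α / 2) * (1 + (y x').re) := by
    intro y
    rw [hP]
    simp [Complex.re_ofReal_mul, Complex.add_re]
  have hGx₀ : 1 - η + α * (1 - δ' / 2) < ‖G x₀‖ := by
    have hGx₀eq : G x₀ = ((‖f x₀‖ : ℂ) + P x₀) • v := by
      show f x₀ + P x₀ • v = _
      rw [add_smul, ← hfx₀v]
    rw [hGx₀eq, norm_smul, hvnorm, mul_one]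
    have h1 : ((‖f x₀‖ : ℂ) + P x₀).re ≤ ‖(‖f x₀‖ : ℂ) + P x₀‖ := Complex.re_le_norm _
    have h2 : ((‖f x₀‖ : ℂ) + P x₀).re = ‖f x₀‖ + (P x₀).re := by
      simp [Complex.add_re]
    rw [h2] at h1
    have h3 : (α / 2) * (1 + (x₀ x').re) > α * (1 - δ' / 2) := by nlinarith
    have := hre x₀
    nlinarith
  -- maximum point of G
  obtain ⟨z₁, hz₁le, hz₁max⟩ := hGmem.exists_max
  set M : ℝ := ‖G z₁‖ with hM
  have hMge : 1 - η + α * (1 - δ' / 2) < M := lt_of_lt_of_le hGx₀ (hz₁max x₀ (by rw [hx₀]))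
  have hMle : M ≤ 1 + α := hGle z₁ hz₁le
  have δ'le : δ' ≤ 1 / 9 := by rw [hδ']; linarith
  have hMpos : 0 < M := by nlinarith
  have hM1 : 1 - M ≤ η := by nlinarith
  -- obtain the attaining point on the sphere
  obtain ⟨x₁, hx₁norm, hx₁max, hx₁close⟩ :
      ∃ x₁ : StrongDual ℂ X, ‖x₁‖ = 1 ∧ ‖G x₁‖ = M ∧ ‖x₁ - x₀‖ < ε := by
    by_cases hz₁s : ‖z₁‖ = 1
    · -- closeness computation
      refine ⟨z₁, hz₁s, rfl, ?_⟩
      set u : ℝ := η / α + δ' / 2 with hu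
      have hule : u ≤ δ / 6 := by
        rw [hu, hδ']
        have : η / α ≤ δ / 9 := by
          rw [div_le_iff₀ αpos]; linarith [ηle2]
        linarith
      have hu6 : u ≤ 1 / 6 := le_trans hule (by linarith)
      have hupos : 0 ≤ u := by positivity
      -- ‖1 + z₁ x'‖ ≥ 2 (1 - u)
      have hphase : 2 * (1 - u) ≤ ‖(1 : ℂ) + z₁ x'‖ := by
        have h1 : M - 1 ≤ ‖P z₁‖ := by
          have : M ≤ ‖f z₁‖ + ‖P z₁ • v‖ := le_trans (le_of_eq hM) (norm_add_le _ _)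
          rw [norm_smul, hvnorm, mul_one] at this
          linarith [hfle z₁ hz₁le]
        have h2 : ‖P z₁‖ = (α / 2) * ‖(1 : ℂ) + z₁ x'‖ := by
          rw [hP]
          simp only [norm_mul, Complex.norm_real]
          rw [Real.norm_eq_abs, abs_of_pos (by positivity)]
        rw [h2] at h1
        -- M - 1 > α - η - α δ'/2 = α(1 - u)
        have h3 : α * (1 - u) < M - 1 := by
          rw [hu]
          have : α * (1 - (η / α + δ' / 2)) = α - η - α * δ' / 2 := by
            field_simp; ring
          rw [this]; nlinarith
        nlinarith
      -- real part bound
      have him : (z₁ x').re ≥ 1 - 4 * u := by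
        set w : ℂ := z₁ x' with hw
        have hw1 : w.re ^ 2 + w.im ^ 2 ≤ 1 := by
          have : ‖w‖ ≤ 1 := by
            calc ‖w‖ ≤ ‖z₁‖ * ‖x'‖ := z₁.le_opNorm x'
            _ ≤ 1 * 1 := mul_le_mul hz₁le hx'le (norm_nonneg _) zero_le_one
            _ = 1 := one_mul 1
          have h := Complex.sq_norm w
          rw [Complex.normSq_apply] at h
          have habs : ‖w‖ ≤ 1 := this
          nlinarith [norm_nonneg w]
        have hw2 : (1 + w.re) ^ 2 + w.im ^ 2 = ‖(1 : ℂ) + w‖ ^ 2 := by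
          rw [Complex.sq_norm, Complex.normSq_apply]
          simp [Complex.add_re, Complex.add_im]
          ring
        nlinarith [hphase, norm_nonneg ((1 : ℂ) + w)]
      -- uniform convexity
      by_contra hcon
      push_neg at hcon
      have hsum : ‖x₀ + z₁‖ ≤ 2 - δ₀ :=
        hδ₀ (le_of_eq hx₀) hz₁le (by rwa [norm_sub_rev] at hcon)
      have h5 : ((x₀ + z₁) x').re ≤ ‖x₀ + z₁‖ := by
        calc ((x₀ + z₁) x').re ≤ ‖(x₀ + z₁) x'‖ := by
              exact Complex.re_le_norm _
        _ ≤ ‖x₀ + z₁‖ * ‖x'‖ := (x₀ + z₁).le_opNorm x'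
        _ ≤ ‖x₀ + z₁‖ * 1 := by
              exact mul_le_mul_of_nonneg_left hx'le (norm_nonneg _)
        _ = ‖x₀ + z₁‖ := mul_one _
      have h6 : ((x₀ + z₁) x').re = (x₀ x').re + (z₁ x').re := by
        rw [ContinuousLinearMap.add_apply, Complex.add_re]
      rw [h6] at h5
      have h7 : (2:ℝ) - δ₀ ≤ 2 - δ := by linarith
      have h8 : 1 - δ' + (1 - 4 * u) < ‖x₀ + z₁‖ := by
        linarith [hx're, him, h5]
      have h9 : 1 - δ / 9 + (1 - 4 * (δ / 6)) ≤ 1 - δ' + (1 - 4 * u) := by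
        rw [hδ']
        linarith
      have h10 : ‖x₀ + z₁‖ ≤ 2 - δ := le_trans hsum h7
      have h11 : 1 - δ / 9 + (1 - 4 * (δ / 6)) < 2 - δ :=
        lt_of_le_of_lt h9 (lt_of_lt_of_le h8 h10)
      linarith [δpos, h11]
    · -- maximum attained in the interior: by the maximum principle, ‖G‖ is constant
      have hz₁lt : ‖z₁‖ < 1 := lt_of_le_of_ne hz₁le hz₁s
      have hGcont : ContinuousOn G (closedBall (0 : StrongDual ℂ X) 1) :=
        hGmem.continuousOn_closedBall
      have hclos : closure (ball (0 : StrongDual ℂ X) 1) = closedBall (0 : StrongDual ℂ X) 1 :=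
        closure_ball 0 one_ne_zero
      have hd : DiffContOnCl ℂ G (ball (0 : StrongDual ℂ X) 1) :=
        ⟨hGmem.2, by rw [hclos]; exact hGcont⟩
      have hmaxon : IsMaxOn (norm ∘ G) (ball (0 : StrongDual ℂ X) 1) z₁ := by
        intro y hy
        exact hz₁max y (le_of_lt (mem_ball_zero_iff.mp hy))
      have heq := Complex.norm_eqOn_closure_of_isPreconnected_of_isMaxOn
        (convex_ball (0 : StrongDual ℂ X) 1).isPreconnected isOpen_ball hd
        (mem_ball_zero_iff.mpr hz₁lt) hmaxon
      have hx₀mem : x₀ ∈ closure (ball (0 : StrongDual ℂ X) 1) := by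
        rw [hclos]; exact mem_closedBall_zero_iff.mpr hx₀.le
      refine ⟨x₀, hx₀, ?_, by simpa using ε0⟩
      simpa using heq hx₀mem
  -- the normalized perturbation g
  set g : StrongDual ℂ X → Y := fun y => ((M : ℝ) : ℂ)⁻¹ • G y with hg
  have hginv : ∀ y : StrongDual ℂ X, ‖g y‖ = M⁻¹ * ‖G y‖ := by
    intro y
    show ‖((M : ℝ) : ℂ)⁻¹ • G y‖ = _
    rw [norm_smul, norm_inv, Complex.norm_real, Real.norm_eq_abs, abs_of_pos hMpos]
  have hgmem : MemAwsu g := ⟨hGmem.1.const_smul _, hGmem.2.const_smul _⟩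
  have hgx₁ : ‖g x₁‖ = 1 := by rw [hginv, hx₁max, inv_mul_cancel₀ hMpos.ne']
  have hgmax : ∀ y : StrongDual ℂ X, ‖y‖ ≤ 1 → ‖g y‖ ≤ ‖g x₁‖ := by
    intro y hy
    rw [hginv, hginv, hx₁max]
    exact mul_le_mul_of_nonneg_left (hz₁max y hy) (inv_nonneg.mpr hMpos.le)
  have hgnorm : supNorm g = 1 := by rw [supNorm_eq_max hx₁norm.le hgmax, hgx₁]
  refine ⟨g, x₁, hgmem, hgnorm, hx₁norm, hgx₁, ?_, hx₁close⟩
  have hdiff : ∀ y : StrongDual ℂ X, ‖y‖ ≤ 1 → ‖g y - f y‖ ≤ 2 * α + η := by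
    intro y hy
    have e1 : ‖g y - G y‖ ≤ α + η := by
      have he : g y - G y = (((M : ℝ) : ℂ)⁻¹ - 1) • G y := by
        show ((M : ℝ) : ℂ)⁻¹ • G y - G y = _
        rw [sub_smul, one_smul]
      rw [he, norm_smul]
      have hnorm1 : ‖(((M : ℝ) : ℂ)⁻¹ - 1)‖ = |M⁻¹ - 1| := by
        have : (((M : ℝ) : ℂ)⁻¹ - 1) = (((M⁻¹ - 1 : ℝ)) : ℂ) := by push_cast; ring
        rw [this, Complex.norm_real, Real.norm_eq_abs]
      rw [hnorm1]
      calc |M⁻¹ - 1| * ‖G y‖ ≤ |M⁻¹ - 1| * M :=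
            mul_le_mul_of_nonneg_left (hz₁max y hy) (abs_nonneg _)
      _ = |(M⁻¹ - 1) * M| := by rw [abs_mul, abs_of_pos hMpos]
      _ = |1 - M| := by rw [sub_mul, inv_mul_cancel₀ hMpos.ne', one_mul]
      _ ≤ α + η := by
          rw [abs_le]
          constructor <;> linarith [hMle, hM1, ηpos.le, αpos.le]
    have e2 : ‖G y - f y‖ ≤ α := by
      show ‖f y + P y • v - f y‖ ≤ α
      rw [add_sub_cancel_left, norm_smul, hvnorm, mul_one]
      exact hPle y hy
    calc ‖g y - f y‖ = ‖(g y - G y) + (G y - f y)‖ := by rw [sub_add_sub_cancel]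
    _ ≤ ‖g y - G y‖ + ‖G y - f y‖ := norm_add_le _ _
    _ ≤ (α + η) + α := add_le_add e1 e2
    _ = 2 * α + η := by ring
  calc supNorm (fun y => g y - f y) ≤ 2 * α + η := supNorm_le hdiff
  _ < ε := by linarith [ηle]
end
end

section
/- Let n ≥ 1 and let X = ℂⁿ equipped with the supremum norm, so that X* is isometrically ℓ₁ⁿ (ℂⁿ with the ℓ₁ norm). Then every point of S_{X*} is a strong peak point for A_{w*u}(B_{X*}) with respect to the norm; consequently, for every complex Banach space Y and every ε ∈ (0, 1) there exists η(ε) > 0 such that whenever f ∈ A_{w*u}(B_{X*}, Y) with ‖f‖∞ = 1 and x₀* ∈ S_{X*} satisfy ‖f(x₀*)‖_Y > 1 − η(ε), there exist g ∈ A_{w*u}(B_{X*}, Y) with ‖g‖∞ = 1 and x₁* ∈ S_{X*} such that ‖g(x₁*)‖_Y = 1, ‖g − f‖∞ < ε and ‖x₁* − x₀*‖ < ε. -/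
open NormedSpace Metric Filter Topology

set_option maxHeartbeats 2000000

noncomputable section

universe u

variable {X Y : Type*} [NormedAddCommGroup X] [NormedSpace ℂ X]
  [NormedAddCommGroup Y] [NormedSpace ℂ Y]

namespace BPBaux

variable {n : ℕ}

/-- The standard basis vectors of `ℂⁿ`. -/
def ee (n : ℕ) (j : Fin n) : (Fin n → ℂ) := Pi.single j 1

lemma apply_eq_sum (y : StrongDual ℂ (Fin n → ℂ)) (x : Fin n → ℂ) :
    y x = ∑ j, x j * y (ee n j) := by
  have hx : x = ∑ j, x j • ee n j := by
    have : ∀ j, x j • ee n j = Pi.single j (x j) := by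
      intro j
      rw [ee, ← Pi.single_smul, smul_eq_mul, mul_one]
    simp_rw [this, Finset.univ_sum_single]
  conv_lhs => rw [hx]
  rw [map_sum]
  simp [smul_eq_mul]

lemma sum_coord_norm_le (y : StrongDual ℂ (Fin n → ℂ)) : ∑ j, ‖y (ee n j)‖ ≤ ‖y‖ := by
  set w : Fin n → ℂ := fun j => (starRingEnd ℂ) (y (ee n j)) / (‖y (ee n j)‖ : ℂ) with hw
  have hwnorm : ‖w‖ ≤ 1 := by
    refine pi_norm_le_iff_of_nonneg zero_le_one |>.2 fun j => ?_
    by_cases h : y (ee n j) = 0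
    · simp [hw, h]
    · rw [hw]
      simp only [norm_div]
      rw [RingHomIsometric.norm_map]
      have : ‖((‖y (ee n j)‖ : ℝ) : ℂ)‖ = ‖y (ee n j)‖ := by
        rw [Complex.norm_real, Real.norm_eq_abs, abs_of_nonneg (norm_nonneg _)]
      rw [this, div_self]
      exact (norm_ne_zero_iff.2 h)
  have hyw : y w = (∑ j, ‖y (ee n j)‖ : ℝ) := by
    rw [apply_eq_sum]
    push_cast
    refine Finset.sum_congr rfl fun j _ => ?_
    by_cases h : y (ee n j) = 0
    · simp [hw, h]
    · rw [hw]
      have hne : ((‖y (ee n j)‖ : ℝ) : ℂ) ≠ 0 := by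
        simpa using norm_ne_zero_iff.2 h
      field_simp
      rw [mul_comm, Complex.mul_conj, Complex.normSq_eq_norm_sq]
      rw [sq]
      field_simp
      norm_num
  have := y.le_opNorm w
  rw [hyw] at this
  have h1 : ‖((∑ j, ‖y (ee n j)‖ : ℝ) : ℂ)‖ = ∑ j, ‖y (ee n j)‖ := by
    rw [Complex.norm_real, Real.norm_eq_abs, abs_of_nonneg]
    exact Finset.sum_nonneg fun j _ => norm_nonneg _
  rw [h1] at this
  calc ∑ j, ‖y (ee n j)‖ ≤ ‖y‖ * ‖w‖ := this
    _ ≤ ‖y‖ * 1 := by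
        have := norm_nonneg y
        nlinarith
    _ = ‖y‖ := mul_one _

lemma norm_le_sum_coord (y : StrongDual ℂ (Fin n → ℂ)) : ‖y‖ ≤ ∑ j, ‖y (ee n j)‖ := by
  refine y.opNorm_le_bound (Finset.sum_nonneg fun j _ => norm_nonneg _) fun x => ?_
  rw [apply_eq_sum]
  calc ‖∑ j, x j * y (ee n j)‖ ≤ ∑ j, ‖x j * y (ee n j)‖ := norm_sum_le _ _
    _ ≤ ∑ j, ‖x‖ * ‖y (ee n j)‖ := by
        refine Finset.sum_le_sum fun j _ => ?_
        rw [norm_mul]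
        exact mul_le_mul_of_nonneg_right (norm_le_pi_norm x j) (norm_nonneg _)
    _ = (∑ j, ‖y (ee n j)‖) * ‖x‖ := by rw [← Finset.mul_sum, mul_comm]

lemma dual_norm_eq (y : StrongDual ℂ (Fin n → ℂ)) : ‖y‖ = ∑ j, ‖y (ee n j)‖ :=
  le_antisymm (norm_le_sum_coord y) (sum_coord_norm_le y)

/-- The unimodular "sign" of the `j`-th coordinate of `x₀`. -/
def sg (x₀ : StrongDual ℂ (Fin n → ℂ)) (j : Fin n) : ℂ :=
  if x₀ (ee n j) = 0 then 1 else x₀ (ee n j) / (‖x₀ (ee n j)‖ : ℂ)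

/-- The modulus of the `j`-th coordinate of `x₀`. -/
def al (x₀ : StrongDual ℂ (Fin n → ℂ)) (j : Fin n) : ℝ := ‖x₀ (ee n j)‖

/-- The rotated coordinates of `y`. -/
def vv (x₀ y : StrongDual ℂ (Fin n → ℂ)) (j : Fin n) : ℂ :=
  (starRingEnd ℂ) (sg x₀ j) * y (ee n j)

/-- The exponent of the peak function at `x₀`. -/
def EE (x₀ y : StrongDual ℂ (Fin n → ℂ)) : ℂ :=
  8 * ((∑ j, vv x₀ y j) - 1) - ∑ j, (vv x₀ y j - (al x₀ j : ℂ)) ^ 2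

/-- The peak function at `x₀` (with sharpness parameter `K`). -/
def pk (K : ℕ) (x₀ y : StrongDual ℂ (Fin n → ℂ)) : ℂ := Complex.exp (K * EE x₀ y)

lemma norm_sg (x₀ : StrongDual ℂ (Fin n → ℂ)) (j : Fin n) : ‖sg x₀ j‖ = 1 := by
  rw [sg]
  by_cases h : x₀ (ee n j) = 0
  · simp [h]
  · rw [if_neg h, norm_div, Complex.norm_real, Real.norm_eq_abs, abs_of_nonneg (norm_nonneg _),
      div_self (norm_ne_zero_iff.2 h)]

lemma vv_norm (x₀ y : StrongDual ℂ (Fin n → ℂ)) (j : Fin n) : ‖vv x₀ y j‖ = ‖y (ee n j)‖ := by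
  rw [vv, norm_mul, RingHomIsometric.norm_map, norm_sg, one_mul]

lemma vv_self (x₀ : StrongDual ℂ (Fin n → ℂ)) (j : Fin n) : vv x₀ x₀ j = (al x₀ j : ℂ) := by
  rw [vv, sg, al]
  by_cases h : x₀ (ee n j) = 0
  · simp [h]
  · rw [if_neg h]
    have hne : ((‖x₀ (ee n j)‖ : ℝ) : ℂ) ≠ 0 := by simpa using norm_ne_zero_iff.2 h
    have hne' : ((‖x₀ (ee n j)‖ : ℝ) : ℂ) ≠ 0 := hne
    rw [map_div₀, Complex.conj_ofReal]
    field_simp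
    rw [mul_comm, Complex.mul_conj, Complex.normSq_eq_norm_sq, sq]
    push_cast
    ring

lemma vv_sub (x₀ y : StrongDual ℂ (Fin n → ℂ)) (j : Fin n) :
    vv x₀ y j - (al x₀ j : ℂ) = (starRingEnd ℂ) (sg x₀ j) * ((y - x₀) (ee n j)) := by
  rw [← vv_self x₀ j, vv, vv]
  simp [mul_sub]

lemma norm_vv_sub (x₀ y : StrongDual ℂ (Fin n → ℂ)) (j : Fin n) :
    ‖vv x₀ y j - (al x₀ j : ℂ)‖ = ‖(y - x₀) (ee n j)‖ := by
  rw [vv_sub, norm_mul, RingHomIsometric.norm_map, norm_sg, one_mul]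

lemma coord_ineq (z : ℂ) (hz : ‖z‖ ≤ 1) : z.re + z.im ^ 2 / 2 ≤ ‖z‖ := by
  have h2 : z.re ^ 2 + z.im ^ 2 = ‖z‖ ^ 2 := by
    rw [Complex.sq_norm, Complex.normSq_apply]; ring
  have hre : z.re ≤ ‖z‖ := by
    exact Complex.re_le_norm z
  nlinarith [mul_nonneg (sub_nonneg.2 hre) (by nlinarith : (0:ℝ) ≤ 2 - z.re - ‖z‖)]

lemma re_sq (w : ℂ) : (w ^ 2).re = w.re ^ 2 - w.im ^ 2 := by
  rw [sq, Complex.mul_re]; ring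

lemma norm_sq_c (w : ℂ) : ‖w‖ ^ 2 = w.re ^ 2 + w.im ^ 2 := by
  rw [Complex.sq_norm, Complex.normSq_apply]; ring

/-- The core inequality: on the unit ball of `ℓ₁ⁿ`, the real part of the exponent is at most
`-∑ |v_j - α_j|²`. -/
lemma EE_re_le (x₀ y : StrongDual ℂ (Fin n → ℂ)) (hy : ‖y‖ ≤ 1) :
    (EE x₀ y).re ≤ -(∑ j, ‖vv x₀ y j - (al x₀ j : ℂ)‖ ^ 2) := by
  set v := vv x₀ y
  have hsum : ∑ j, ‖v j‖ ≤ 1 := by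
    calc ∑ j, ‖v j‖ = ∑ j, ‖y (ee n j)‖ :=
        Finset.sum_congr rfl fun j _ => vv_norm x₀ y j
      _ = ‖y‖ := (dual_norm_eq y).symm
      _ ≤ 1 := hy
  have hvle : ∀ j, ‖v j‖ ≤ 1 := fun j =>
    le_trans (Finset.single_le_sum (fun i _ => norm_nonneg (v i)) (Finset.mem_univ j)) hsum
  have hcoord : ∑ j, ((v j).re + (v j).im ^ 2 / 2) ≤ 1 :=
    le_trans (Finset.sum_le_sum fun j _ => coord_ineq (v j) (hvle j)) hsum
  have hre : (EE x₀ y).re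
      = 8 * ((∑ j, (v j).re) - 1) - ∑ j, (((v j).re - al x₀ j) ^ 2 - (v j).im ^ 2) := by
    have h8 : ∀ w : ℂ, ((8:ℂ) * w).re = 8 * w.re := by
      intro w; simp [Complex.mul_re]
    rw [EE, Complex.sub_re, h8, Complex.sub_re, Complex.re_sum, Complex.one_re, Complex.re_sum]
    congr 1
    refine Finset.sum_congr rfl fun j _ => ?_
    rw [re_sq]
    simp [Complex.sub_re, Complex.sub_im, Complex.ofReal_re, Complex.ofReal_im]
    rfl
  have hnorm : ∀ j, ‖v j - (al x₀ j : ℂ)‖ ^ 2 = ((v j).re - al x₀ j) ^ 2 + (v j).im ^ 2 := by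
    intro j
    rw [norm_sq_c]
    simp [Complex.sub_re, Complex.sub_im, Complex.ofReal_re, Complex.ofReal_im]
  rw [hre]
  have hA : ∑ j, ((v j).re + (v j).im ^ 2 / 2)
      = (∑ j, (v j).re) + (∑ j, (v j).im ^ 2) / 2 := by
    rw [Finset.sum_add_distrib, Finset.sum_div]
  rw [hA] at hcoord
  have hBnn : (0:ℝ) ≤ ∑ j, (v j).im ^ 2 := Finset.sum_nonneg fun j _ => sq_nonneg _
  have hsplit1 : ∑ j, (((v j).re - al x₀ j) ^ 2 - (v j).im ^ 2)
      = (∑ j, ((v j).re - al x₀ j) ^ 2) - ∑ j, (v j).im ^ 2 := Finset.sum_sub_distrib _ _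
  have hsplit2 : ∑ j, ‖v j - (al x₀ j : ℂ)‖ ^ 2
      = (∑ j, ((v j).re - al x₀ j) ^ 2) + ∑ j, (v j).im ^ 2 := by
    rw [← Finset.sum_add_distrib]
    exact Finset.sum_congr rfl fun j _ => hnorm j
  rw [hsplit1, hsplit2]
  linarith

lemma al_sum (x₀ : StrongDual ℂ (Fin n → ℂ)) (hx₀ : ‖x₀‖ = 1) : ∑ j, al x₀ j = 1 := by
  rw [← hx₀, dual_norm_eq x₀]; rfl

lemma EE_self (x₀ : StrongDual ℂ (Fin n → ℂ)) (hx₀ : ‖x₀‖ = 1) : EE x₀ x₀ = 0 := by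
  rw [EE]
  have h1 : ∑ j, vv x₀ x₀ j = 1 := by
    have : ∑ j, vv x₀ x₀ j = ((∑ j, al x₀ j : ℝ) : ℂ) := by
      push_cast
      exact Finset.sum_congr rfl fun j _ => vv_self x₀ j
    rw [this, al_sum x₀ hx₀]
    norm_num
  have h2 : ∀ j : Fin n, (vv x₀ x₀ j - (al x₀ j : ℂ)) ^ 2 = 0 := by
    intro j; rw [vv_self x₀ j]; ring
  rw [h1, Finset.sum_congr rfl fun j _ => h2 j]
  simp

lemma pk_self (K : ℕ) (x₀ : StrongDual ℂ (Fin n → ℂ)) (hx₀ : ‖x₀‖ = 1) : pk K x₀ x₀ = 1 := by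
  rw [pk, EE_self x₀ hx₀, mul_zero, Complex.exp_zero]

lemma norm_pk (K : ℕ) (x₀ y : StrongDual ℂ (Fin n → ℂ)) :
    ‖pk K x₀ y‖ = Real.exp ((EE x₀ y).re) ^ K := by
  rw [pk, Complex.norm_exp, ← Real.exp_nat_mul]
  congr 1
  simp [Complex.mul_re]

lemma sum_sq_ge (x₀ y : StrongDual ℂ (Fin n → ℂ)) (hn : 1 ≤ n) :
    ‖y - x₀‖ ^ 2 / n ≤ ∑ j, ‖vv x₀ y j - (al x₀ j : ℂ)‖ ^ 2 := by
  have h1 : ∑ j, ‖vv x₀ y j - (al x₀ j : ℂ)‖ ^ 2 = ∑ j, ‖(y - x₀) (ee n j)‖ ^ 2 :=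
    Finset.sum_congr rfl fun j _ => by rw [norm_vv_sub]
  have h2 : (∑ j, ‖(y - x₀) (ee n j)‖) ^ 2 ≤ (n : ℝ) * ∑ j, ‖(y - x₀) (ee n j)‖ ^ 2 := by
    have := sq_sum_le_card_mul_sum_sq (s := Finset.univ) (f := fun j => ‖(y - x₀) (ee n j)‖)
    simpa using this
  have h3 : ‖y - x₀‖ = ∑ j, ‖(y - x₀) (ee n j)‖ := dual_norm_eq _
  have hn' : (0:ℝ) < n := by positivity
  rw [h1, div_le_iff₀ hn', h3]
  linarith [h2]

lemma norm_pk_le (K : ℕ) (x₀ y : StrongDual ℂ (Fin n → ℂ)) (hn : 1 ≤ n) (hy : ‖y‖ ≤ 1) :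
    ‖pk K x₀ y‖ ≤ Real.exp (-(‖y - x₀‖ ^ 2 / n)) ^ K := by
  rw [norm_pk]
  refine pow_le_pow_left₀ (Real.exp_nonneg _) (Real.exp_le_exp.2 ?_) K
  have := EE_re_le x₀ y hy
  have := sum_sq_ge x₀ y hn
  linarith

lemma norm_pk_le_one (K : ℕ) (x₀ y : StrongDual ℂ (Fin n → ℂ)) (hn : 1 ≤ n) (hy : ‖y‖ ≤ 1) :
    ‖pk K x₀ y‖ ≤ 1 := by
  refine le_trans (norm_pk_le K x₀ y hn hy) ?_
  refine pow_le_one₀ (Real.exp_nonneg _) ?_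
  rw [Real.exp_le_one_iff]
  have h : (0:ℝ) ≤ ‖y - x₀‖ ^ 2 / n := by positivity
  linarith

lemma differentiable_pk (K : ℕ) (x₀ : StrongDual ℂ (Fin n → ℂ)) :
    Differentiable ℂ (pk K x₀) := by
  have hev : ∀ j : Fin n, Differentiable ℂ (fun y : StrongDual ℂ (Fin n → ℂ) => y (ee n j)) :=
    fun j => (ContinuousLinearMap.apply ℂ ℂ (ee n j)).differentiable
  have hvv : ∀ j, Differentiable ℂ (fun y => vv x₀ y j) := by
    intro j
    exact (differentiable_const _).mul (hev j)
  have hEE : Differentiable ℂ (fun y => EE x₀ y) := by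
    refine Differentiable.sub ?_ ?_
    · exact (differentiable_const _).mul ((Differentiable.fun_sum fun j _ => hvv j).sub
        (differentiable_const _))
    · exact Differentiable.fun_sum fun j _ => ((hvv j).sub (differentiable_const _)).pow 2
  exact ((differentiable_const _).mul hEE).cexp

lemma continuous_pk_weak (K : ℕ) (x₀ : StrongDual ℂ (Fin n → ℂ)) :
    Continuous fun φ : WeakDual ℂ (Fin n → ℂ) => pk K x₀ (WeakDual.toStrongDual φ) := by
  have hev : ∀ j : Fin n, Continuous fun φ : WeakDual ℂ (Fin n → ℂ) =>
      (WeakDual.toStrongDual φ) (ee n j) := by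
    intro j
    simpa [WeakDual.toStrongDual_apply] using WeakDual.eval_continuous (𝕜 := ℂ) (ee n j)
  have hvv : ∀ j, Continuous fun φ : WeakDual ℂ (Fin n → ℂ) =>
      vv x₀ (WeakDual.toStrongDual φ) j := by
    intro j
    exact continuous_const.mul (hev j)
  have hEE : Continuous fun φ : WeakDual ℂ (Fin n → ℂ) => EE x₀ (WeakDual.toStrongDual φ) := by
    refine Continuous.sub ?_ ?_
    · exact continuous_const.mul ((continuous_finset_sum _ fun j _ => hvv j).sub continuous_const)
    · exact continuous_finset_sum _ fun j _ => ((hvv j).sub continuous_const).pow 2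
  exact (continuous_const.mul hEE).cexp

section SupNormLemmas

variable {X' Y' : Type*} [NormedAddCommGroup X'] [NormedSpace ℂ X']
  [NormedAddCommGroup Y'] [NormedSpace ℂ Y']

lemma nonempty_ball : Nonempty (closedBall (0 : StrongDual ℂ X') 1) :=
  ⟨⟨0, mem_closedBall_self zero_le_one⟩⟩

lemma supNorm_le {c : ℝ} (f : StrongDual ℂ X' → Y')
    (hc : ∀ y ∈ closedBall (0 : StrongDual ℂ X') 1, ‖f y‖ ≤ c) : supNorm f ≤ c := by
  have := nonempty_ball (X' := X')
  exact ciSup_le fun x => hc x x.2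

lemma bddAbove_of_le {c : ℝ} (f : StrongDual ℂ X' → Y')
    (hc : ∀ y ∈ closedBall (0 : StrongDual ℂ X') 1, ‖f y‖ ≤ c) :
    BddAbove (Set.range fun x : closedBall (0 : StrongDual ℂ X') 1 => ‖f (x : StrongDual ℂ X')‖) := by
  refine ⟨c, ?_⟩
  rintro t ⟨x, rfl⟩
  exact hc x x.2

lemma le_supNorm (f : StrongDual ℂ X' → Y')
    (hb : BddAbove (Set.range fun x : closedBall (0 : StrongDual ℂ X') 1 => ‖f (x : StrongDual ℂ X')‖))
    {y : StrongDual ℂ X'} (hy : y ∈ closedBall (0 : StrongDual ℂ X') 1) : ‖f y‖ ≤ supNorm f :=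
  le_ciSup hb ⟨y, hy⟩

lemma memAwsu_continuousOn (f : StrongDual ℂ X' → Y') (hf : MemAwsu f) :
    ContinuousOn f (closedBall (0 : StrongDual ℂ X') 1) := by
  have h1 : ContinuousOn
      (fun y : StrongDual ℂ X' => f (WeakDual.toStrongDual (StrongDual.toWeakDual y)))
      (closedBall (0 : StrongDual ℂ X') 1) := by
    refine hf.1.comp NormedSpace.Dual.toWeakDual_continuous.continuousOn ?_
    intro y hy
    simpa using mem_closedBall_zero_iff.1 hy
  simpa using h1

end SupNormLemmas

/-- Part 1: every point of the unit sphere of `ℓ₁ⁿ` is a strong peak point. -/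
lemma peak_point (hn : 1 ≤ n) (x₀ : StrongDual ℂ (Fin n → ℂ)) (hx₀ : ‖x₀‖ = 1) :
    IsNormStrongPeakPoint x₀ := by
  have hx₀ball : x₀ ∈ closedBall (0 : StrongDual ℂ (Fin n → ℂ)) 1 := by
    rw [mem_closedBall_zero_iff, hx₀]
  have hle1 : ∀ y ∈ closedBall (0 : StrongDual ℂ (Fin n → ℂ)) 1, ‖pk 1 x₀ y‖ ≤ 1 :=
    fun y hy => norm_pk_le_one 1 x₀ y hn (mem_closedBall_zero_iff.1 hy)
  have hpk1 : ‖pk 1 x₀ x₀‖ = 1 := by rw [pk_self 1 x₀ hx₀]; simp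
  refine ⟨pk 1 x₀, ⟨(continuous_pk_weak 1 x₀).continuousOn,
      (differentiable_pk 1 x₀).differentiableOn⟩, ?_, hpk1, ?_⟩
  · refine le_antisymm (supNorm_le _ hle1) ?_
    calc (1:ℝ) = ‖pk 1 x₀ x₀‖ := hpk1.symm
      _ ≤ supNorm (pk 1 x₀) := le_supNorm _ (bddAbove_of_le _ hle1) hx₀ball
  · intro δ hδ
    have hn' : (0:ℝ) < n := by positivity
    refine ⟨Real.exp (-(δ ^ 2 / n)), ?_, ?_⟩
    · rw [Real.exp_lt_one_iff]
      have : (0:ℝ) < δ ^ 2 / n := by positivity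
      linarith
    · intro y hy hyd
      have h1 := norm_pk_le 1 x₀ y hn (mem_closedBall_zero_iff.1 hy)
      rw [pow_one] at h1
      refine le_trans h1 (Real.exp_le_exp.2 ?_)
      have h2 : δ ^ 2 ≤ ‖y - x₀‖ ^ 2 := pow_le_pow_left₀ hδ.le hyd 2
      exact by gcongr

end BPBaux

open BPBaux in
/-- For `X = ℂⁿ` with the supremum norm (so `X* = ℓ₁ⁿ`), every point of `S_{X*}` is a
strong peak point with respect to the norm, and the vector-valued
Bishop-Phelps-Bollobás theorem holds for `A_{w*u}(B_{X*}, Y)` for every complex Banach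
space `Y`. -/
theorem bpb_Awsu_ell1n (n : ℕ) (hn : 1 ≤ n) :
    (∀ x₀ : StrongDual ℂ (Fin n → ℂ), ‖x₀‖ = 1 → IsNormStrongPeakPoint x₀) ∧
    (∀ (Y : Type u) [NormedAddCommGroup Y] [NormedSpace ℂ Y] [CompleteSpace Y],
      ∀ ε ∈ Set.Ioo (0 : ℝ) 1, ∃ η > 0,
        ∀ f : StrongDual ℂ (Fin n → ℂ) → Y, MemAwsu f → supNorm f = 1 →
          ∀ x₀ : StrongDual ℂ (Fin n → ℂ), ‖x₀‖ = 1 → 1 - η < ‖f x₀‖ →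
            ∃ g : StrongDual ℂ (Fin n → ℂ) → Y, ∃ x₁ : StrongDual ℂ (Fin n → ℂ),
              MemAwsu g ∧ supNorm g = 1 ∧ ‖x₁‖ = 1 ∧
              ‖g x₁‖ = 1 ∧ supNorm (fun y => g y - f y) < ε ∧ ‖x₁ - x₀‖ < ε) := by
  constructor
  · exact fun x₀ hx₀ => peak_point hn x₀ hx₀
  · intro Y _ _ _ ε hε
    obtain ⟨hε0, hε1⟩ := hε
    refine ⟨ε/5, by linarith, ?_⟩
    intro f hfA hf1 x₀ hx₀ hfx₀
    have hx₀ball : x₀ ∈ closedBall (0 : StrongDual ℂ (Fin n → ℂ)) 1 := by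
      rw [mem_closedBall_zero_iff, hx₀]
    have hfc : ContinuousOn f (closedBall (0 : StrongDual ℂ (Fin n → ℂ)) 1) :=
      memAwsu_continuousOn f hfA
    haveI : ProperSpace (StrongDual ℂ (Fin n → ℂ)) := FiniteDimensional.proper ℂ _
    have hfbdd : BddAbove
        (Set.range fun x : closedBall (0 : StrongDual ℂ (Fin n → ℂ)) 1 => ‖f (x : StrongDual ℂ (Fin n → ℂ))‖) := by
      have hcomp : IsCompact (closedBall (0 : StrongDual ℂ (Fin n → ℂ)) 1) := isCompact_closedBall _ _
      have h2 := hcomp.bddAbove_image hfc.norm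
      rwa [Set.image_eq_range] at h2
    have hfle : ∀ y ∈ closedBall (0 : StrongDual ℂ (Fin n → ℂ)) 1, ‖f y‖ ≤ 1 := by
      intro y hy
      rw [← hf1]; exact le_supNorm f hfbdd hy
    set r := ‖f x₀‖ with hrdef
    have hr1 : r ≤ 1 := hfle x₀ hx₀ball
    have hr0 : 1 - ε/5 < r := hfx₀
    have hrpos : (0:ℝ) < r := by linarith
    set δ : ℝ := ε/2 with hδdef
    have hδpos : 0 < δ := by positivity
    have hn0 : (0:ℝ) < n := by positivity
    set ρ : ℝ := Real.exp (-(δ^2 / n)) with hρdef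
    have hρpos : 0 < ρ := Real.exp_pos _
    have hρ1 : ρ < 1 := by
      rw [hρdef, Real.exp_lt_one_iff]
      have : (0:ℝ) < δ^2/n := by positivity
      linarith
    obtain ⟨K, hK⟩ := exists_pow_lt_of_lt_one (by norm_num : (0:ℝ) < 2/5) hρ1
    have hρKpos : (0:ℝ) ≤ ρ^K := by positivity
    set β : ℝ := r⁻¹ - 1 + ε/5 with hβdef
    have h1r : 1 ≤ r⁻¹ := by
      rw [le_inv_comm₀ one_pos hrpos]
      simpa using hr1
    have hβ5 : ε/5 ≤ β := by rw [hβdef]; linarith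
    have hβpos : 0 < β := lt_of_lt_of_le (by linarith) hβ5
    have hβr : β * r = 1 - r + (ε/5) * r := by
      rw [hβdef]
      field_simp
    have hβrlt : β * r < 2*ε/5 := by nlinarith
    have hβlt : β < ε/2 := by nlinarith
    set u := f x₀ with hu
    have hur : ‖u‖ = r := by rw [hu, hrdef]
    set g₀ : StrongDual ℂ (Fin n → ℂ) → Y := fun y => f y + ((β : ℂ) * pk K x₀ y) • u with hg₀
    have hnormReal : ∀ t : ℝ, ‖(t:ℂ)‖ = |t| := fun t => by
      rw [Complex.norm_real, Real.norm_eq_abs]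
    have hdiffy : ∀ y, g₀ y - f y = ((β : ℂ) * pk K x₀ y) • u := by
      intro y; rw [hg₀]; exact add_sub_cancel_left _ _
    have hdiffnorm : ∀ y, ‖g₀ y - f y‖ = β * ‖pk K x₀ y‖ * r := by
      intro y
      rw [hdiffy y, norm_smul, norm_mul, hnormReal, abs_of_pos hβpos, hur]
    have hdiffle : ∀ y ∈ closedBall (0 : StrongDual ℂ (Fin n → ℂ)) 1, ‖g₀ y - f y‖ ≤ β * r := by
      intro y hy
      rw [hdiffnorm y]
      have hp := norm_pk_le_one K x₀ y hn (mem_closedBall_zero_iff.1 hy)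
      have hp0 : (0:ℝ) ≤ ‖pk K x₀ y‖ := norm_nonneg _
      nlinarith [mul_nonneg (mul_nonneg hβpos.le (sub_nonneg.2 hp)) hrpos.le]
    have hg₀A : MemAwsu g₀ := by
      constructor
      · exact hfA.1.add
          (((continuous_const.mul (continuous_pk_weak K x₀)).smul continuous_const).continuousOn)
      · exact hfA.2.add
          (((differentiable_const _).mul (differentiable_pk K x₀)).smul_const u).differentiableOn
    have hg₀c : ContinuousOn g₀ (closedBall (0 : StrongDual ℂ (Fin n → ℂ)) 1) :=
      memAwsu_continuousOn g₀ hg₀A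
    have hg₀le : ∀ y ∈ closedBall (0 : StrongDual ℂ (Fin n → ℂ)) 1, ‖g₀ y‖ ≤ 1 + β * r := by
      intro y hy
      calc ‖g₀ y‖ = ‖f y + (g₀ y - f y)‖ := by rw [add_sub_cancel]
        _ ≤ ‖f y‖ + ‖g₀ y - f y‖ := norm_add_le _ _
        _ ≤ 1 + β * r := add_le_add (hfle y hy) (hdiffle y hy)
    have hg₀bdd : BddAbove
        (Set.range fun x : closedBall (0 : StrongDual ℂ (Fin n → ℂ)) 1 => ‖g₀ (x : StrongDual ℂ (Fin n → ℂ))‖) :=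
      bddAbove_of_le g₀ hg₀le
    have hg₀x₀ : ‖g₀ x₀‖ = 1 + (ε/5) * r := by
      have e1 : g₀ x₀ = f x₀ + ((β:ℂ) * pk K x₀ x₀) • u := rfl
      have h1 : g₀ x₀ = ((1 + β : ℝ) : ℂ) • u := by
        rw [e1, pk_self K x₀ hx₀, mul_one, ← hu]
        have e2 : ((1 + β : ℝ) : ℂ) = 1 + (β:ℂ) := by push_cast; ring
        rw [e2, add_smul, one_smul]
      rw [h1, norm_smul, hnormReal, abs_of_pos (by linarith : (0:ℝ) < 1 + β), hur]
      have e3 : (1 + β) * r = r + β * r := by ring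
      rw [e3, hβr]
      ring
    set M := supNorm g₀ with hM
    have hMge : 1 + (ε/5)*r ≤ M := by rw [← hg₀x₀]; exact le_supNorm _ hg₀bdd hx₀ball
    have hMle : M ≤ 1 + β * r := supNorm_le _ hg₀le
    have hM1 : 1 < M := by
      have h5 : 0 < (ε/5) * r := by positivity
      linarith
    have hM0 : 0 < M := by linarith
    haveI : Nontrivial (StrongDual ℂ (Fin n → ℂ)) := by
      refine nontrivial_of_ne x₀ 0 fun hcon => ?_
      rw [hcon] at hx₀
      simp at hx₀
    have hdc : DiffContOnCl ℂ g₀ (ball (0 : StrongDual ℂ (Fin n → ℂ)) 1) :=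
      ⟨hg₀A.2, by rwa [closure_ball (0 : StrongDual ℂ (Fin n → ℂ)) one_ne_zero]⟩
    obtain ⟨x₁, hx₁fr, hx₁max⟩ :=
      Complex.exists_mem_frontier_isMaxOn_norm isBounded_ball ⟨0, mem_ball_self one_pos⟩ hdc
    rw [frontier_ball (0 : StrongDual ℂ (Fin n → ℂ)) one_ne_zero] at hx₁fr
    have hx₁norm : ‖x₁‖ = 1 := by rwa [mem_sphere_zero_iff_norm] at hx₁fr
    have hx₁ball : x₁ ∈ closedBall (0 : StrongDual ℂ (Fin n → ℂ)) 1 := by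
      rw [mem_closedBall_zero_iff, hx₁norm]
    have hmaxcb : ∀ y ∈ closedBall (0 : StrongDual ℂ (Fin n → ℂ)) 1, ‖g₀ y‖ ≤ ‖g₀ x₁‖ := by
      intro y hy
      have hy' : y ∈ closure (ball (0 : StrongDual ℂ (Fin n → ℂ)) 1) := by
        rwa [closure_ball (0 : StrongDual ℂ (Fin n → ℂ)) one_ne_zero]
      exact hx₁max hy'
    have hMx₁ : ‖g₀ x₁‖ = M := le_antisymm (le_supNorm _ hg₀bdd hx₁ball) (supNorm_le _ hmaxcb)
    have hx₁x₀ : ‖x₁ - x₀‖ < δ := by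
      by_contra hcon
      push_neg at hcon
      have hpk1 : ‖pk K x₀ x₁‖ ≤ ρ^K := by
        refine le_trans (norm_pk_le K x₀ x₁ hn hx₁norm.le) ?_
        refine pow_le_pow_left₀ (Real.exp_nonneg _) (Real.exp_le_exp.2 ?_) K
        have h2 : δ^2 ≤ ‖x₁ - x₀‖^2 := by
          have := pow_le_pow_left₀ hδpos.le hcon 2
          simpa using this
        have h3 : δ^2/n ≤ ‖x₁ - x₀‖^2/n := by gcongr
        linarith
      have hb : ‖g₀ x₁‖ ≤ 1 + β * ρ^K * r := by
        calc ‖g₀ x₁‖ = ‖f x₁ + (g₀ x₁ - f x₁)‖ := by rw [add_sub_cancel]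
          _ ≤ ‖f x₁‖ + ‖g₀ x₁ - f x₁‖ := norm_add_le _ _
          _ ≤ 1 + β * ρ^K * r := by
              refine add_le_add (hfle x₁ hx₁ball) ?_
              rw [hdiffnorm x₁]
              nlinarith [norm_nonneg (pk K x₀ x₁)]
      have h1 : β * ρ^K < ε/5 := by nlinarith
      have h2 : 1 + β * ρ^K * r < 1 + (ε/5)*r := by nlinarith
      rw [hMx₁] at hb
      clear_value M β ρ r
      linarith only [hb, h2, hMge]
    set g : StrongDual ℂ (Fin n → ℂ) → Y := fun y => ((M⁻¹ : ℝ) : ℂ) • g₀ y with hg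
    have hMinv : |(M⁻¹ : ℝ)| = M⁻¹ := abs_of_pos (by positivity)
    have hgnorm : ∀ y, ‖g y‖ = M⁻¹ * ‖g₀ y‖ := by
      intro y
      rw [hg]
      simp only [norm_smul, hnormReal, hMinv]
    have hgle : ∀ y ∈ closedBall (0 : StrongDual ℂ (Fin n → ℂ)) 1, ‖g y‖ ≤ 1 := by
      intro y hy
      rw [hgnorm y]
      have h2 : ‖g₀ y‖ ≤ M := le_supNorm _ hg₀bdd hy
      calc M⁻¹ * ‖g₀ y‖ ≤ M⁻¹ * M := by
            refine mul_le_mul_of_nonneg_left h2 (by positivity)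
        _ = 1 := inv_mul_cancel₀ (ne_of_gt hM0)
    have hgx₁ : ‖g x₁‖ = 1 := by
      rw [hgnorm x₁, hMx₁, inv_mul_cancel₀ (ne_of_gt hM0)]
    have hgA : MemAwsu g := by
      constructor
      · exact hg₀A.1.const_smul _
      · exact hg₀A.2.const_smul _
    have hg1 : supNorm g = 1 := by
      refine le_antisymm (supNorm_le _ hgle) ?_
      rw [← hgx₁]
      exact le_supNorm _ (bddAbove_of_le _ hgle) hx₁ball
    refine ⟨g, x₁, hgA, hg1, hx₁norm, hgx₁, ?_, ?_⟩
    · have hdle : ∀ y ∈ closedBall (0 : StrongDual ℂ (Fin n → ℂ)) 1,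
          ‖g y - f y‖ ≤ (M - 1) + β * r := by
        intro y hy
        have hsplit : g y - f y
            = (((M⁻¹ : ℝ) : ℂ) - 1) • g₀ y + (g₀ y - f y) := by
          rw [hg]
          module
        rw [hsplit]
        have hc : ‖(((M⁻¹ : ℝ) : ℂ) - 1)‖ = 1 - M⁻¹ := by
          have : (((M⁻¹ : ℝ) : ℂ) - 1) = (((M⁻¹ - 1 : ℝ)) : ℂ) := by push_cast; ring
          rw [this, hnormReal, abs_of_nonpos (by
            have : M⁻¹ < 1 := by
              rw [inv_lt_one_iff₀]
              right; exact hM1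
            linarith)]
          ring
        calc ‖(((M⁻¹ : ℝ) : ℂ) - 1) • g₀ y + (g₀ y - f y)‖
            ≤ ‖(((M⁻¹ : ℝ) : ℂ) - 1) • g₀ y‖ + ‖g₀ y - f y‖ := norm_add_le _ _
          _ ≤ (1 - M⁻¹) * M + β * r := by
              refine add_le_add ?_ (hdiffle y hy)
              rw [norm_smul, hc]
              have h2 : ‖g₀ y‖ ≤ M := le_supNorm _ hg₀bdd hy
              have h3 : (0:ℝ) ≤ 1 - M⁻¹ := by
                have : M⁻¹ ≤ 1 := by
                  rw [inv_le_one_iff₀]; right; exact hM1.le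
                linarith
              exact mul_le_mul_of_nonneg_left h2 h3
          _ = (M - 1) + β * r := by
              field_simp
      have hsle : supNorm (fun y => g y - f y) ≤ (M - 1) + β * r :=
        supNorm_le _ hdle
      have hfin : (M - 1) + β * r < ε := by
        clear_value M β r
        linarith only [hMle, hβrlt, hε0]
      linarith only [hsle, hfin]
    · rw [hδdef] at hx₁x₀
      linarith
end
end

section
/- Let X be a complex Banach space. Every strong peak point for A_{w*u}(B_{X*}) is a complex extreme point of B_{X*}; that is, Γ ⊆ ext_ℂ(B_{X*}). -/
open NormedSpace Metric Filter Topology Complex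

noncomputable section
set_option maxHeartbeats 1000000

variable {X Y : Type*} [NormedAddCommGroup X] [NormedSpace ℂ X]
  [NormedAddCommGroup Y] [NormedSpace ℂ Y]

/-- `x₀` is a strong peak point for `A_{w*u}(B_{X*})` (peaking with respect to the weak-*
topology). -/
def IsWStarStrongPeakPoint (x₀ : StrongDual ℂ X) : Prop :=
  ∃ f : StrongDual ℂ X → ℂ, MemAwsu f ∧ supNorm f = 1 ∧ ‖f x₀‖ = 1 ∧
    ∀ W : Set (WeakDual ℂ X), IsOpen W → StrongDual.toWeakDual x₀ ∈ W →
      ∃ c < 1, ∀ y ∈ closedBall (0 : StrongDual ℂ X) 1,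
        StrongDual.toWeakDual y ∉ W → ‖f y‖ ≤ c

/-- `x` is a complex extreme point of the closed unit ball of `Z`:
`sup_{0 ≤ θ ≤ 2π} ‖x + e^{iθ} y‖ > 1` for every nonzero `y`. -/
def IsComplexExtremePoint {Z : Type*} [NormedAddCommGroup Z] [NormedSpace ℂ Z]
    (x : Z) : Prop :=
  x ∈ closedBall (0 : Z) 1 ∧
    ∀ y : Z, y ≠ 0 → ∃ θ ∈ Set.Icc (0 : ℝ) (2 * Real.pi),
      1 < ‖x + Complex.exp (θ * Complex.I) • y‖

/-- Every strong peak point for `A_{w*u}(B_{X*})` is a complex extreme point of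
`B_{X*}`, i.e. `Γ ⊆ ext_ℂ(B_{X*})`. -/
theorem strong_peak_point_is_complex_extreme
    (X : Type*) [NormedAddCommGroup X] [NormedSpace ℂ X] [CompleteSpace X]
    (x₀ : StrongDual ℂ X) (hx₀ : ‖x₀‖ = 1) (hpk : IsWStarStrongPeakPoint x₀) :
    IsComplexExtremePoint x₀ := by
  obtain ⟨f, ⟨hfc, hfd⟩, hsup, hfx₀, hpeak⟩ := hpk
  refine ⟨by simpa [mem_closedBall, dist_zero_right] using hx₀.le, ?_⟩
  intro y hy
  by_contra hcon
  push_neg at hcon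
  -- Step 1: the whole circle (in fact the disc) x₀ + λ•y lies in the unit ball.
  have hsph : ∀ lam : ℂ, ‖lam‖ = 1 → ‖x₀ + lam • y‖ ≤ 1 := by
    intro lam hlam
    have habs : ‖lam‖ = 1 := hlam
    have hlam' : lam = Complex.exp (lam.arg * Complex.I) := by
      conv_lhs => rw [← Complex.norm_mul_exp_arg_mul_I lam]
      rw [habs]; simp
    rcases le_or_gt 0 lam.arg with h0 | h0
    · have := hcon lam.arg ⟨h0, le_trans (Complex.arg_le_pi lam)
        (by nlinarith [Real.pi_pos])⟩
      rwa [← hlam'] at this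
    · have hθ : (0:ℝ) ≤ lam.arg + 2 * Real.pi := by
        nlinarith [Complex.neg_pi_lt_arg lam, Real.pi_pos]
      have hθ2 : lam.arg + 2 * Real.pi ≤ 2 * Real.pi := by nlinarith
      have h := hcon (lam.arg + 2 * Real.pi) ⟨hθ, hθ2⟩
      have heq : Complex.exp (↑(lam.arg + 2 * Real.pi) * Complex.I) = lam := by
        push_cast
        rw [add_mul, Complex.exp_add, ← hlam']
        rw [Complex.exp_two_pi_mul_I, mul_one]
      rwa [heq] at h
  have hball : ∀ lam : ℂ, ‖lam‖ ≤ 1 → ‖x₀ + lam • y‖ ≤ 1 := by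
    intro lam hlam
    rcases eq_or_ne lam 0 with rfl | hne
    · have hx0y : x₀ + (0:ℂ) • y = x₀ := by ext z; simp
      rw [hx0y, hx₀]
    · have ha : (0:ℝ) < ‖lam‖ := norm_pos_iff.mpr hne
      set μ : ℂ := (‖lam‖ : ℂ) with hμ
      have hμne : μ ≠ 0 := by
        simp only [hμ, Ne, Complex.ofReal_eq_zero]; exact ha.ne'
      have hdec : (1 - μ) • x₀ + μ • (x₀ + (μ⁻¹ * lam) • y)
          = x₀ + (μ * (μ⁻¹ * lam)) • y := by module
      rw [mul_inv_cancel_left₀ hμne] at hdec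
      rw [← hdec]
      have h1 : ‖(1 - μ) • x₀‖ = 1 - ‖lam‖ := by
        rw [norm_smul, hx₀, mul_one, hμ]
        rw [show (1 : ℂ) - (‖lam‖ : ℂ) = ((1 - ‖lam‖ : ℝ) : ℂ) by push_cast; ring]
        rw [Complex.norm_real, Real.norm_eq_abs, _root_.abs_of_nonneg (by linarith)]
      have h2 : ‖μ • (x₀ + (μ⁻¹ * lam) • y)‖ ≤ ‖lam‖ := by
        rw [norm_smul]
        have h3 : ‖μ⁻¹ * lam‖ = 1 := by
          rw [norm_mul, norm_inv, hμ, Complex.norm_real, Real.norm_eq_abs,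
            _root_.abs_of_nonneg ha.le]
          field_simp
        have h4 := hsph _ h3
        have h5 : ‖μ‖ = ‖lam‖ := by
          rw [hμ, Complex.norm_real, Real.norm_eq_abs, _root_.abs_of_nonneg ha.le]
        rw [h5]
        nlinarith
      calc ‖(1 - μ) • x₀ + μ • (x₀ + (μ⁻¹ * lam) • y)‖
          ≤ ‖(1 - μ) • x₀‖ + ‖μ • (x₀ + (μ⁻¹ * lam) • y)‖ := norm_add_le _ _
        _ ≤ (1 - ‖lam‖) + ‖lam‖ := by rw [h1]; linarith
        _ = 1 := by ring
  -- Step 2: pick a witness x with y x ≠ 0 and build the weak-* neighborhood W.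
  obtain ⟨x, hxy⟩ : ∃ x, y x ≠ 0 := by
    by_contra h
    push_neg at h
    exact hy (ContinuousLinearMap.ext fun x => by simp [h x])
  set A : ℝ := ‖y x‖ with hAdef
  have hA : 0 < A := norm_pos_iff.mpr hxy
  set B : ℝ := ‖x₀ x‖ with hBdef
  have hB : 0 ≤ B := norm_nonneg _
  set W : Set (WeakDual ℂ X) := {φ | ‖φ x - x₀ x‖ < A / 2} with hWdef
  have hWopen : IsOpen W := by
    have : W = (fun φ : WeakDual ℂ X => φ x) ⁻¹' Metric.ball (x₀ x) (A/2) := by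
      ext φ; simp [hWdef, Metric.mem_ball, dist_eq_norm]
    rw [this]
    exact (WeakDual.eval_continuous x).isOpen_preimage _ isOpen_ball
  have hx₀W : StrongDual.toWeakDual x₀ ∈ W := by
    have : (StrongDual.toWeakDual x₀) x = x₀ x := rfl
    simp only [hWdef, Set.mem_setOf_eq, this, sub_self, norm_zero]
    positivity
  obtain ⟨c, hc1, hc⟩ := hpeak W hWopen hx₀W
  -- Step 3: for r close to 1, bound ‖f (r • x₀)‖ by c via the maximum principle.
  set r₀ : ℝ := (A/2 + B)/(A + B) with hr₀def
  have hr₀0 : 0 < r₀ := div_pos (by linarith) (by linarith)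
  have hr₀1 : r₀ < 1 := (div_lt_one (by linarith)).mpr (by linarith)
  have key : ∀ r : ℝ, r ∈ Set.Ioo r₀ 1 → ‖f ((r:ℂ) • x₀)‖ ≤ c := by
    rintro r ⟨hr1, hr2⟩
    have hrpos : 0 < r := lt_trans hr₀0 hr1
    have hnr : ‖(r:ℂ)‖ = r := by
      rw [Complex.norm_real, Real.norm_eq_abs, _root_.abs_of_nonneg hrpos.le]
    have hmem : ∀ lam : ℂ, ‖lam‖ ≤ 1 →
        (r:ℂ) • (x₀ + lam • y) ∈ ball (0 : StrongDual ℂ X) 1 := by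
      intro lam hlam
      rw [mem_ball, dist_zero_right, norm_smul, hnr]
      calc r * ‖x₀ + lam • y‖ ≤ r * 1 :=
            mul_le_mul_of_nonneg_left (hball lam hlam) hrpos.le
        _ < 1 := by linarith
    set g : ℂ → ℂ := fun lam => f ((r:ℂ) • (x₀ + lam • y)) with hgdef
    have hg : DiffContOnCl ℂ g (ball (0:ℂ) 1) := by
      apply DifferentiableOn.diffContOnCl
      rw [closure_ball (0:ℂ) one_ne_zero]
      intro lam hlam
      have hlam' : ‖lam‖ ≤ 1 := by
        simpa [mem_closedBall, dist_zero_right] using hlam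
      have h1 : DifferentiableAt ℂ (fun lam : ℂ => (r:ℂ) • (x₀ + lam • y)) lam := by
        exact ((differentiableAt_const x₀).add (differentiableAt_id.smul_const y)).const_smul (r:ℂ)
      have h2 : DifferentiableAt ℂ f ((r:ℂ) • (x₀ + lam • y)) :=
        (hfd _ (hmem lam hlam')).differentiableAt
          (isOpen_ball.mem_nhds (hmem lam hlam'))
      exact (h2.comp lam h1).differentiableWithinAt
    have hfr : ∀ z ∈ frontier (ball (0:ℂ) 1), ‖g z‖ ≤ c := by
      rw [frontier_ball (0:ℂ) one_ne_zero]
      intro lam hlam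
      have hlam1 : ‖lam‖ = 1 := by
        simpa [mem_sphere_iff_norm, sub_zero] using hlam
      apply hc
      · rw [mem_closedBall, dist_zero_right, norm_smul, hnr]
        calc r * ‖x₀ + lam • y‖ ≤ r * 1 :=
              mul_le_mul_of_nonneg_left (hball lam hlam1.le) hrpos.le
          _ ≤ 1 := by linarith
      · intro hW
        have hev : (StrongDual.toWeakDual ((r:ℂ) • (x₀ + lam • y))) x
            = (r:ℂ) * (x₀ x + lam * (y x)) := rfl
        simp only [hWdef, Set.mem_setOf_eq, hev] at hW
        have heq : (r:ℂ) * (x₀ x + lam * (y x)) - x₀ x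
            = (r:ℂ) * lam * (y x) - ((1:ℂ) - (r:ℂ)) * (x₀ x) := by ring
        rw [heq] at hW
        have t1 : ‖(r:ℂ) * lam * (y x)‖ = r * A := by
          rw [norm_mul, norm_mul, hnr, hlam1, mul_one]
        have t2 : ‖((1:ℂ) - (r:ℂ)) * (x₀ x)‖ = (1 - r) * B := by
          rw [norm_mul]
          congr 1
          rw [show (1 : ℂ) - (r : ℂ) = ((1 - r : ℝ) : ℂ) by push_cast; ring,
            Complex.norm_real, Real.norm_eq_abs, _root_.abs_of_nonneg (by linarith)]
        have t3 : ‖(r:ℂ) * lam * (y x)‖ - ‖((1:ℂ) - (r:ℂ)) * (x₀ x)‖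
            ≤ ‖(r:ℂ) * lam * (y x) - ((1:ℂ) - (r:ℂ)) * (x₀ x)‖ :=
          norm_sub_norm_le _ _
        have hrAB : A/2 + B < r * (A + B) := by
          rw [hr₀def] at hr1
          calc A/2 + B = ((A/2 + B)/(A+B)) * (A+B) := by
                field_simp
            _ < r * (A + B) :=
                mul_lt_mul_of_pos_right hr1 (by linarith)
        rw [t1, t2] at t3
        nlinarith
    have h0 : (0:ℂ) ∈ closure (ball (0:ℂ) 1) := by
      rw [closure_ball (0:ℂ) one_ne_zero]
      simp
    have := Complex.norm_le_of_forall_mem_frontier_norm_le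
      isBounded_ball hg hfr h0
    have hx0y : x₀ + (0:ℂ) • y = x₀ := by ext z; simp
    have h' : g 0 = f ((r:ℂ) • x₀) := by rw [hgdef]; dsimp only; rw [hx0y]
    rw [h'] at this
    exact this
  -- Step 4: let r → 1⁻ and derive the contradiction ‖f x₀‖ ≤ c < 1.
  have hmaps : Set.MapsTo (fun r : ℝ => StrongDual.toWeakDual ((r:ℂ) • x₀))
      (Set.Icc (0:ℝ) 1) {φ : WeakDual ℂ X | ‖WeakDual.toStrongDual φ‖ ≤ 1} := by
    rintro r ⟨hr0, hr1⟩
    have : WeakDual.toStrongDual (StrongDual.toWeakDual ((r:ℂ) • x₀))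
        = (r:ℂ) • x₀ := rfl
    simp only [Set.mem_setOf_eq, this, norm_smul, hx₀, mul_one,
      Complex.norm_real, Real.norm_eq_abs, _root_.abs_of_nonneg hr0]
    exact hr1
  have hco : ContinuousOn (fun r : ℝ => f ((r:ℂ) • x₀)) (Set.Icc (0:ℝ) 1) := by
    have h1 : Continuous (fun r : ℝ => StrongDual.toWeakDual ((r:ℂ) • x₀)) :=
      NormedSpace.Dual.toWeakDual_continuous.comp
        (Complex.continuous_ofReal.smul continuous_const)
    exact hfc.comp h1.continuousOn hmaps
  have hsub : Set.Ioo r₀ 1 ⊆ Set.Icc (0:ℝ) 1 := fun r hr =>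
    ⟨le_of_lt (lt_trans hr₀0 hr.1), le_of_lt hr.2⟩
  have hcw : ContinuousWithinAt (fun r : ℝ => f ((r:ℂ) • x₀)) (Set.Icc (0:ℝ) 1) 1 :=
    hco 1 (by norm_num)
  have htend : Tendsto (fun r : ℝ => f ((r:ℂ) • x₀)) (𝓝[Set.Ioo r₀ 1] 1)
      (𝓝 (f x₀)) := by
    have := (hcw.mono hsub).tendsto
    simpa using this
  haveI : (𝓝[Set.Ioo r₀ 1] (1:ℝ)).NeBot := by
    apply mem_closure_iff_nhdsWithin_neBot.mp
    rw [closure_Ioo hr₀1.ne]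
    exact Set.right_mem_Icc.mpr hr₀1.le
  have hle : ‖f x₀‖ ≤ c := by
    apply le_of_tendsto htend.norm
    exact eventually_nhdsWithin_of_forall fun r hr => key r hr
  rw [hfx₀] at hle
  linarith
end
end
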